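/- arXiv:0809.3546 — 6 statements merged into one kernel-verified Lean document; each statement's English description precedes it below -/
import Mathlib

section
/- Let q be a prime power and L a field extension of Fq of degree m with m ≥ n. Let 1 ≤ k < n and let T ∈ L^{n×n} be invertible; write T^T = [G₁; G] where G₁ ∈ L^{k×n} consists of the first k rows of T^T and G ∈ L^{(n−k)×n} of the last n−k rows. Suppose the code {G^T u : u ∈ L^{n−k}} has minimum rank distance k + 1 (i.e., G generates an [n, n−k] linear MRD code over L). Let S be a random variable with values in L^k, let V be uniformly distributed on L^{n−k} and independent of S, and let X = T·(S; V) ∈ L^n, where (S; V) denotes the column vector obtained by stacking S on top of V. Then for every integer 0 ≤ μ ≤ n − k and every matrix B ∈ Fq^{μ×n} (acting on L^n via the embedding Fq ⊆ L), I(S; BX) = 0. -/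
set_option autoImplicit false

open Matrix MeasureTheory

/-- Shannon entropy (in nats) of a finitely-valued random variable. -/
noncomputable def entropy {Ω α : Type*} [Fintype α] [MeasurableSpace Ω]
    (P : Measure Ω) (X : Ω → α) : ℝ :=
  - ∑ a : α, (P {ω | X ω = a}).toReal * Real.log (P {ω | X ω = a}).toReal

/-- Mutual information (in nats) `I(X;Y) = H(X) + H(Y) - H(X,Y)`. -/
noncomputable def mutualInfo {Ω α β : Type*} [Fintype α] [Fintype β] [MeasurableSpace Ω]
    (P : Measure Ω) (X : Ω → α) (Y : Ω → β) : ℝ :=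
  entropy P X + entropy P Y - entropy P (fun ω => (X ω, Y ω))

/-- The rank weight of `x ∈ L^n`: the dimension over `F` of the `F`-span of its coordinates. -/
noncomputable def rankWeight (F : Type*) {L : Type*} [Field F] [Field L] [Algebra F L]
    {n : ℕ} (x : Fin n → L) : ℕ :=
  Module.finrank F (Submodule.span F (Set.range x))

/-- The minimum rank distance of a code `C ⊆ L^n` equals `d`. -/
def minRankDistEq (F : Type*) {L : Type*} [Field F] [Field L] [Algebra F L]
    {n : ℕ} (C : Set (Fin n → L)) (d : ℕ) : Prop :=
  IsLeast {e | ∃ x ∈ C, ∃ y ∈ C, x ≠ y ∧ rankWeight F (x - y) = e} d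

/-- The column vector `(s; v) ∈ L^n` obtained by stacking `s ∈ L^k` on top of
`v ∈ L^{n-k}`. -/
def stackVec {L : Type*} {k n : ℕ} (s : Fin k → L) (v : Fin (n - k) → L) : Fin n → L :=
  fun i => if h : (i : ℕ) < k then s ⟨i, h⟩
    else v ⟨(i : ℕ) - k, by have := i.isLt; omega⟩

/-- The last `n - k` rows of `Tᵀ`. -/
def lastRows {L : Type*} {k n : ℕ} (hkn : k < n) (M : Matrix (Fin n) (Fin n) L) :
    Matrix (Fin (n - k)) (Fin n) L :=
  M.submatrix (fun i : Fin (n - k) => (⟨k + (i : ℕ), by have := i.isLt; omega⟩ : Fin n)) id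


section Helpers
variable {Ω : Type} [Fintype Ω] [MeasurableSpace Ω] [MeasurableSingletonClass Ω]
  (P : Measure Ω) [IsProbabilityMeasure P]

omit [IsProbabilityMeasure P] in
lemma meas_partition {ι : Type*} [Fintype ι] (Q : Set Ω) (f : Ω → ι) :
    P Q = ∑ i : ι, P (Q ∩ {ω | f ω = i}) := by
  rw [← measure_biUnion_finset]
  · congr 1
    ext ω; simp
  · intro i _ j _ hij
    refine Set.disjoint_left.2 ?_
    rintro ω ⟨_, hi⟩ ⟨_, hj⟩
    exact hij (by simp only [Set.mem_setOf_eq] at hi hj; rw [← hi, ← hj])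
  · intro i _; exact (Set.toFinite _).measurableSet

lemma sum_meas_eq_one {ι : Type*} [Fintype ι] (f : Ω → ι) :
    ∑ i : ι, P {ω | f ω = i} = 1 := by
  have h := meas_partition P Set.univ f
  simp only [Set.univ_inter, measure_univ] at h
  exact h.symm

lemma mutualInfo_eq_zero_of_indep {α β : Type*} [Fintype α] [Fintype β]
    (X : Ω → α) (Y : Ω → β)
    (h : ∀ a b, P {ω | X ω = a ∧ Y ω = b} = P {ω | X ω = a} * P {ω | Y ω = b}) :
    mutualInfo P X Y = 0 := by
  have hsf : ∑ a : α, (P {ω | X ω = a}).toReal = 1 := by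
    rw [← ENNReal.toReal_sum (fun a _ => measure_ne_top _ _), sum_meas_eq_one P X,
      ENNReal.toReal_one]
  have hsg : ∑ b : β, (P {ω | Y ω = b}).toReal = 1 := by
    rw [← ENNReal.toReal_sum (fun b _ => measure_ne_top _ _), sum_meas_eq_one P Y,
      ENNReal.toReal_one]
  have key : entropy P (fun ω => (X ω, Y ω)) = entropy P X + entropy P Y := by
    have hpair : ∀ ab : α × β, (P {ω | (X ω, Y ω) = ab}).toReal
        = (P {ω | X ω = ab.1}).toReal * (P {ω | Y ω = ab.2}).toReal := by
      intro ab
      have hset : {ω | (X ω, Y ω) = ab} = {ω | X ω = ab.1 ∧ Y ω = ab.2} := by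
        ext ω; simp [Prod.ext_iff]
      rw [hset, h, ENNReal.toReal_mul]
    have hterm : ∀ (x y : ℝ), x * y * Real.log (x * y)
        = (x * Real.log x) * y + x * (y * Real.log y) := by
      intro x y
      rcases eq_or_ne x 0 with h0 | h0
      · simp [h0]
      rcases eq_or_ne y 0 with h1 | h1
      · simp [h1]
      rw [Real.log_mul h0 h1]; ring
    unfold entropy
    rw [Fintype.sum_prod_type]
    simp_rw [hpair, hterm]
    simp_rw [Finset.sum_add_distrib, ← Finset.mul_sum, ← Finset.sum_mul, hsf, hsg]
    ring
  unfold mutualInfo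
  rw [key]; ring

end Helpers

section LinAlg

variable {F L : Type} [Field F] [Fintype F] [Field L] [Fintype L] [Algebra F L]
variable {n k : ℕ}

lemma stackVec_split (s : Fin k → L) (v : Fin (n - k) → L) :
    stackVec (n := n) s v = stackVec s 0 + stackVec 0 v := by
  funext i
  simp only [stackVec, Pi.add_apply]
  split <;> simp

lemma stackVec_zero_add (v v' : Fin (n - k) → L) :
    stackVec (n := n) (0 : Fin k → L) (v + v')
      = stackVec 0 v + stackVec 0 v' := by
  funext i
  simp only [stackVec, Pi.add_apply]
  split <;> simp

lemma stackVec_zero_zero : stackVec (n := n) (0 : Fin k → L) (0 : Fin (n - k) → L) = 0 := by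
  funext i
  simp only [stackVec, Pi.zero_apply]
  split <;> simp

lemma stackVec_zero_eq_zero {u : Fin (n - k) → L} (hkn : k ≤ n)
    (h : stackVec (n := n) (0 : Fin k → L) u = 0) : u = 0 := by
  funext j
  have hj : k + (j : ℕ) < n := by have := j.isLt; omega
  have := congrFun h ⟨k + (j : ℕ), hj⟩
  simp only [stackVec, Pi.zero_apply] at this
  rw [dif_neg (by omega)] at this
  convert this using 2
  exact (Fin.ext (by simp)).symm
  rfl

lemma mulVec_stackVec_zero (hkn : k < n) (T : Matrix (Fin n) (Fin n) L)
    (v : Fin (n - k) → L) :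
    T *ᵥ stackVec (0 : Fin k → L) v = (lastRows hkn Tᵀ)ᵀ *ᵥ v := by
  have hn : k + (n - k) = n := by omega
  funext i
  show ∑ j : Fin n, T i j * stackVec 0 v j = _
  rw [← Fintype.sum_equiv ((finSumFinEquiv (m := k) (n := n - k)).trans (finCongr hn))
    (fun x => T i (((finSumFinEquiv).trans (finCongr hn)) x)
      * stackVec 0 v (((finSumFinEquiv).trans (finCongr hn)) x))
    (fun j => T i j * stackVec 0 v j) (fun x => rfl)]
  rw [Fintype.sum_sum_type]
  have h1 : ∀ a : Fin k,
      T i (((finSumFinEquiv).trans (finCongr hn)) (Sum.inl a))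
        * stackVec (0 : Fin k → L) v (((finSumFinEquiv).trans (finCongr hn)) (Sum.inl a)) = 0 := by
    intro a
    have hv : ((((finSumFinEquiv).trans (finCongr hn)) (Sum.inl a) : Fin n) : ℕ) = (a : ℕ) := by
      simp [finSumFinEquiv, finCongr]
    rw [show stackVec (0 : Fin k → L) v ((((finSumFinEquiv).trans (finCongr hn)) (Sum.inl a)))
      = 0 from by simp only [stackVec]; rw [dif_pos (by rw [hv]; exact a.isLt)]; simp]
    ring
  rw [Finset.sum_eq_zero (fun a _ => h1 a), zero_add]
  apply Finset.sum_congr rfl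
  intro b _
  have heq : (((finSumFinEquiv).trans (finCongr hn)) (Sum.inr b) : Fin n)
      = ⟨k + (b : ℕ), by omega⟩ := Fin.ext (by simp [finSumFinEquiv, finCongr])
  rw [heq]
  have hs : stackVec (0 : Fin k → L) v (⟨k + (b : ℕ), by omega⟩ : Fin n) = v b := by
    rw [show stackVec (0 : Fin k → L) v (⟨k + (b : ℕ), by omega⟩ : Fin n)
      = v ⟨k + (b : ℕ) - k, by omega⟩ from dif_neg (by simp)]
    congr 1
    exact Fin.ext (by simp)
  rw [hs]
  simp [lastRows]


set_option maxHeartbeats 1000000 in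
lemma key_lemma (hkn : k < n)
    (T : Matrix (Fin n) (Fin n) L) (hT : IsUnit T)
    (hMRD : minRankDistEq F
      {x : Fin n → L | ∃ u : Fin (n - k) → L, x = (lastRows hkn Tᵀ)ᵀ *ᵥ u} (k + 1))
    {μ : ℕ} (hμ : μ ≤ n - k) (B : Matrix (Fin μ) (Fin n) F) (s : Fin k → L) :
    ∃ v : Fin (n - k) → L,
      (B.map (algebraMap F L)) *ᵥ (T *ᵥ stackVec s 0)
        = (B.map (algebraMap F L)) *ᵥ ((lastRows hkn Tᵀ)ᵀ *ᵥ v) := by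
  classical
  set e : F →+* L := (algebraMap F L)
  set Bl : Matrix (Fin μ) (Fin n) L := B.map e with hBl
  set T₂ : Matrix (Fin n) (Fin (n - k)) L := (lastRows hkn Tᵀ)ᵀ with hT₂
  set K : Submodule L (Fin n → L) := LinearMap.ker (Matrix.mulVecLin Bl) with hK
  set C : Submodule L (Fin n → L) := LinearMap.range (Matrix.mulVecLin T₂) with hCdef
  suffices hsup : C ⊔ K = ⊤ by
    have hmem : T *ᵥ stackVec s 0 ∈ C ⊔ K := by rw [hsup]; trivial
    obtain ⟨c, hc, kk, hkk, hsum⟩ := Submodule.mem_sup.1 hmem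
    obtain ⟨v, hv⟩ := hc
    refine ⟨v, ?_⟩
    rw [← hsum, Matrix.mulVec_add]
    have hkk' : Bl *ᵥ kk = 0 := hkk
    have hv' : T₂ *ᵥ v = c := hv
    rw [hkk', add_zero, hv']
  by_contra hsup
  -- dimension of C
  have hinj : Function.Injective (Matrix.mulVecLin T₂) := by
    rw [← LinearMap.ker_eq_bot, LinearMap.ker_eq_bot']
    intro u hu
    have hu' : T₂ *ᵥ u = 0 := hu
    have h2 : T *ᵥ stackVec (0 : Fin k → L) u = 0 := by
      rw [mulVec_stackVec_zero hkn, ← hT₂, hu']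
    have h3 : stackVec (0 : Fin k → L) u = 0 := by
      apply Matrix.mulVec_injective_iff_isUnit.2 hT
      rw [h2, Matrix.mulVec_zero]
    exact stackVec_zero_eq_zero hkn.le h3
  have hC : Module.finrank L C = n - k := by
    rw [LinearMap.finrank_range_of_inj hinj, Module.finrank_pi, Fintype.card_fin]
  have hlt : Module.finrank L (C ⊔ K : Submodule L (Fin n → L)) < n := by
    have h := Submodule.finrank_lt (K := L) (V := Fin n → L) hsup
    rwa [Module.finrank_pi, Fintype.card_fin] at h
  -- kernel of B over F
  set W : Submodule F (Fin n → F) := LinearMap.ker (Matrix.mulVecLin B) with hW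
  have hWk : k ≤ Module.finrank F W := by
    have h1 := LinearMap.finrank_range_add_finrank_ker (Matrix.mulVecLin B)
    have h2 : Module.finrank F (LinearMap.range (Matrix.mulVecLin B)) ≤ μ := by
      have := Submodule.finrank_le (LinearMap.range (Matrix.mulVecLin B))
      rwa [Module.finrank_pi, Fintype.card_fin] at this
    rw [Module.finrank_pi, Fintype.card_fin] at h1
    rw [← hW] at h1
    omega
  set bW := Module.finBasis F W with hbW
  set w : Fin k → (Fin n → F) :=
    fun j => (bW (Fin.castLE hWk j) : Fin n → F) with hw
  have hwind : LinearIndependent F w := by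
    have h1 : LinearIndependent F (fun j : Fin k => bW (Fin.castLE hWk j)) :=
      bW.linearIndependent.comp _ (Fin.castLE_injective hWk)
    exact h1.map' W.subtype (Submodule.ker_subtype W)
  have hwker : ∀ j, B *ᵥ w j = 0 := by
    intro j
    exact (bW (Fin.castLE hWk j)).2
  -- transfer to L
  have hmap : ∀ {a b : ℕ} (M : Matrix (Fin a) (Fin b) F) (x : Fin b → F),
      (M.map e) *ᵥ (fun i => e (x i)) = fun i => e ((M *ᵥ x) i) := by
    intro a b M x
    funext i
    exact (RingHom.map_mulVec e M x i).symm
  set wL : Fin k → (Fin n → L) := fun j i => e (w j i) with hwL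
  have hwLK : ∀ j, wL j ∈ K := by
    intro j
    have : Bl *ᵥ wL j = 0 := by
      rw [hwL, hBl, hmap B (w j), hwker j]
      funext i; simp
    exact this
  -- linear independence of wL over L
  have hwLind : LinearIndependent L wL := by
    set Wm : Matrix (Fin n) (Fin k) F := Matrix.of (fun i j => w j i) with hWm
    have hWminj : LinearMap.ker (Matrix.mulVecLin Wm) = ⊥ := by
      rw [LinearMap.ker_eq_bot']
      intro x hx
      have hx' : Wm *ᵥ x = 0 := hx
      have hsum : ∑ j, x j • w j = 0 := by
        funext i
        have := congrFun hx' i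
        simp only [Matrix.mulVec, dotProduct, hWm, Matrix.of_apply,
          Pi.zero_apply] at this
        simpa [Finset.sum_apply, mul_comm] using this
      exact funext (Fintype.linearIndependent_iff.1 hwind x hsum)
    obtain ⟨r, hr⟩ := LinearMap.exists_leftInverse_of_injective _ hWminj
    set Rm : Matrix (Fin k) (Fin n) F := LinearMap.toMatrix' r with hRm
    have hRw : ∀ j, Rm *ᵥ w j = Pi.single j 1 := by
      intro j
      have h1 : Wm *ᵥ Pi.single j 1 = w j := by
        rw [Matrix.mulVec_single_one]
        funext i; simp [hWm]
      have h2 : r (Wm *ᵥ Pi.single j 1) = Pi.single j 1 := by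
        have := congrFun (congrArg (fun f => f.toFun) hr) (Pi.single j 1)
        simpa using this
      rw [h1] at h2
      rw [hRm, ← Matrix.toLin'_apply, Matrix.toLin'_toMatrix', h2]
    rw [Fintype.linearIndependent_iff]
    intro g hg
    have happ : (Rm.map e) *ᵥ (∑ j, g j • wL j) = 0 := by rw [hg, Matrix.mulVec_zero]
    have hexp : (Rm.map e) *ᵥ (∑ j, g j • wL j) = ∑ j, g j • ((Rm.map e) *ᵥ wL j) := by
      rw [show (Rm.map e) *ᵥ (∑ j, g j • wL j)
          = (Rm.map e).mulVecLin (∑ j, g j • wL j) from rfl, map_sum]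
      simp
    have hsingle : ∀ j, (Rm.map e) *ᵥ wL j = Pi.single j 1 := by
      intro j
      rw [hwL, hmap Rm (w j), hRw j]
      funext i
      rcases eq_or_ne i j with rfl | hij
      · simp
      · simp [Pi.single_apply, hij]
    rw [hexp] at happ
    simp only [hsingle] at happ
    intro j
    have := congrFun happ j
    simpa [Pi.single_apply] using this
  set U : Submodule L (Fin n → L) := Submodule.span L (Set.range wL) with hU
  have hUrk : Module.finrank L U = k := by
    rw [hU, finrank_span_eq_card hwLind, Fintype.card_fin]
  have hUK : U ≤ K := Submodule.span_le.2 (by rintro _ ⟨j, rfl⟩; exact hwLK j)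
  -- dimension counting
  have e1 := Submodule.finrank_sup_add_finrank_inf_eq C K
  have e2 := Submodule.finrank_sup_add_finrank_inf_eq (C ⊓ K) U
  have h3 : Module.finrank L ((C ⊓ K) ⊔ U : Submodule L (Fin n → L)) ≤ Module.finrank L K :=
    Submodule.finrank_mono (sup_le inf_le_right hUK)
  have h4 : Module.finrank L K ≤ n := by
    have := Submodule.finrank_le K
    rwa [Module.finrank_pi, Fintype.card_fin] at this
  have h5 : 1 ≤ Module.finrank L ((C ⊓ K) ⊓ U : Submodule L (Fin n → L)) := by omega
  have hne : ((C ⊓ K) ⊓ U : Submodule L (Fin n → L)) ≠ ⊥ := by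
    intro hbot
    rw [hbot, finrank_bot] at h5
    omega
  obtain ⟨c, hcmem, hc0⟩ := Submodule.exists_mem_ne_zero_of_ne_bot hne
  have hcC : c ∈ C := hcmem.1.1
  have hcU : c ∈ U := hcmem.2
  -- rank weight bound
  obtain ⟨lam, hlam⟩ := (Finsupp.mem_span_range_iff_exists_finsupp).1 hcU
  have hspan : Submodule.span F (Set.range c) ≤ Submodule.span F (Set.range (⇑lam)) := by
    rw [Submodule.span_le]
    rintro _ ⟨i, rfl⟩
    have hci : c i = ∑ j ∈ lam.support, lam j * wL j i := by
      rw [← hlam]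
      simp [Finsupp.sum, Finset.sum_apply]
    rw [hci]
    apply Submodule.sum_mem
    intro j _
    have : lam j * wL j i = (w j i) • lam j := by
      rw [Algebra.smul_def, hwL]; ring
    rw [this]
    exact Submodule.smul_mem _ _ (Submodule.subset_span ⟨j, rfl⟩)
  have hrw : rankWeight F c ≤ k := by
    unfold rankWeight
    calc Module.finrank F (Submodule.span F (Set.range c))
        ≤ Module.finrank F (Submodule.span F (Set.range (⇑lam))) :=
          Submodule.finrank_mono hspan
      _ ≤ k := by
          have := finrank_range_le_card (R := F) (⇑lam)
          simpa [Set.finrank, Fintype.card_fin] using this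
  -- contradiction with MRD
  have hcset : c ∈ {x : Fin n → L | ∃ u : Fin (n - k) → L, x = (lastRows hkn Tᵀ)ᵀ *ᵥ u} := by
    obtain ⟨u, hu⟩ := hcC
    exact ⟨u, hu.symm⟩
  have h0set : (0 : Fin n → L) ∈
      {x : Fin n → L | ∃ u : Fin (n - k) → L, x = (lastRows hkn Tᵀ)ᵀ *ᵥ u} :=
    ⟨0, by rw [Matrix.mulVec_zero]⟩
  have hlb := hMRD.2 ⟨c, hcset, 0, h0set, hc0, rfl⟩
  rw [sub_zero] at hlb
  omega

end LinAlg

/-- Encoder structure for coset coding, generator-matrix form: with `T` invertible, `G` the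
last `n - k` rows of `Tᵀ` generating an MRD code (minimum rank distance `k+1`), `V` uniform
on `L^{n-k}` independent of `S`, and `X = T·(S;V)`, the scheme is universally secure under
`μ` observations for every `μ ≤ n - k`. -/
theorem encoder_generator_MRD_universally_secure
    (q m : ℕ) (hq : IsPrimePow q)
    (F L : Type) [Field F] [Fintype F] (hF : Fintype.card F = q)
    [Field L] [Fintype L] [Algebra F L] (hm : Module.finrank F L = m)
    (n k : ℕ) (hmn : n ≤ m) (hk : 1 ≤ k) (hkn : k < n)
    (T : Matrix (Fin n) (Fin n) L) (hT : IsUnit T)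
    (hMRD : minRankDistEq F
      {x : Fin n → L | ∃ u : Fin (n - k) → L, x = (lastRows hkn Tᵀ)ᵀ *ᵥ u} (k + 1))
    (Ω : Type) [Fintype Ω] [MeasurableSpace Ω] [MeasurableSingletonClass Ω]
    (P : Measure Ω) [IsProbabilityMeasure P]
    (S : Ω → Fin k → L) (V : Ω → Fin (n - k) → L)
    (hVunif : ∀ v₁ v₂ : Fin (n - k) → L, P {ω | V ω = v₁} = P {ω | V ω = v₂})
    (hindep : ∀ (s : Fin k → L) (v : Fin (n - k) → L),
      P {ω | S ω = s ∧ V ω = v} = P {ω | S ω = s} * P {ω | V ω = v})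
    (X : Ω → Fin n → L)
    (hX : ∀ ω, X ω = T *ᵥ stackVec (S ω) (V ω)) :
    ∀ (μ : ℕ), μ ≤ n - k → ∀ B : Matrix (Fin μ) (Fin n) F,
      mutualInfo P S (fun ω => (B.map (algebraMap F L)) *ᵥ X ω) = 0 := by
  intro μ hμ B
  classical
  set Bl : Matrix (Fin μ) (Fin n) L := B.map (algebraMap F L) with hBl
  set Y : Ω → Fin μ → L := fun ω => Bl *ᵥ X ω with hY
  set N : (Fin (n - k) → L) → (Fin μ → L) :=
    fun v => Bl *ᵥ ((lastRows hkn Tᵀ)ᵀ *ᵥ v) with hN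
  set A : (Fin k → L) → (Fin μ → L) := fun s => Bl *ᵥ (T *ᵥ stackVec s 0) with hA
  have hYdecomp : ∀ ω, Y ω = A (S ω) + N (V ω) := by
    intro ω
    rw [hY]
    show Bl *ᵥ X ω = _
    rw [hX ω, stackVec_split, Matrix.mulVec_add, Matrix.mulVec_add, hA, hN,
      mulVec_stackVec_zero hkn]
  have hNadd : ∀ v v', N (v + v') = N v + N v' := by
    intro v v'
    rw [hN]
    show Bl *ᵥ _ = _
    rw [Matrix.mulVec_add, Matrix.mulVec_add]
  have hKL : ∀ s, ∃ v, A s = N v := fun s => key_lemma hkn T hT hMRD hμ B s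
  -- joint law with N(V)
  have hjoint : ∀ (s : Fin k → L) (z : Fin μ → L),
      P {ω | S ω = s ∧ N (V ω) = z} = P {ω | S ω = s} * P {ω | N (V ω) = z} := by
    intro s z
    rw [meas_partition P {ω | S ω = s ∧ N (V ω) = z} V,
      meas_partition P {ω | N (V ω) = z} V, Finset.mul_sum]
    apply Finset.sum_congr rfl
    intro v _
    rcases eq_or_ne (N v) z with h | h
    · rw [show {ω | S ω = s ∧ N (V ω) = z} ∩ {ω | V ω = v} = {ω | S ω = s ∧ V ω = v} from by
        ext ω
        simp only [Set.mem_inter_iff, Set.mem_setOf_eq]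
        constructor
        · rintro ⟨⟨h1, _⟩, h3⟩; exact ⟨h1, h3⟩
        · rintro ⟨h1, h3⟩; exact ⟨⟨h1, by rw [h3, h]⟩, h3⟩]
      rw [show {ω | N (V ω) = z} ∩ {ω | V ω = v} = {ω | V ω = v} from by
        ext ω
        simp only [Set.mem_inter_iff, Set.mem_setOf_eq]
        constructor
        · rintro ⟨_, h3⟩; exact h3
        · intro h3; exact ⟨by rw [h3, h], h3⟩]
      exact hindep s v
    · rw [show {ω | S ω = s ∧ N (V ω) = z} ∩ {ω | V ω = v} = (∅ : Set Ω) from by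
        ext ω
        simp only [Set.mem_inter_iff, Set.mem_setOf_eq, Set.mem_empty_iff_false, iff_false,
          not_and]
        rintro ⟨_, h2⟩ h3
        exact h (by rw [← h3]; exact h2)]
      rw [show {ω | N (V ω) = z} ∩ {ω | V ω = v} = (∅ : Set Ω) from by
        ext ω
        simp only [Set.mem_inter_iff, Set.mem_setOf_eq, Set.mem_empty_iff_false, iff_false,
          not_and]
        rintro h2 h3
        exact h (by rw [← h3]; exact h2)]
      rw [measure_empty, mul_zero]
  -- count formula and shift invariance
  have hcount : ∀ z : Fin μ → L, P {ω | N (V ω) = z}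
      = (Finset.univ.filter (fun v => N v = z)).card
        • P {ω | V ω = (0 : Fin (n - k) → L)} := by
    intro z
    rw [meas_partition P {ω | N (V ω) = z} V]
    have h2 : ∀ v, P ({ω | N (V ω) = z} ∩ {ω | V ω = v})
        = if N v = z then P {ω | V ω = (0 : Fin (n - k) → L)} else 0 := by
      intro v
      rcases eq_or_ne (N v) z with h | h
      · rw [if_pos h, show {ω | N (V ω) = z} ∩ {ω | V ω = v} = {ω | V ω = v} from by
          ext ω
          simp only [Set.mem_inter_iff, Set.mem_setOf_eq]
          exact ⟨fun hh => hh.2, fun h3 => ⟨by rw [h3, h], h3⟩⟩]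
        exact hVunif v 0
      · rw [if_neg h, show {ω | N (V ω) = z} ∩ {ω | V ω = v} = (∅ : Set Ω) from by
          ext ω
          simp only [Set.mem_inter_iff, Set.mem_setOf_eq, Set.mem_empty_iff_false, iff_false,
            not_and]
          rintro h2 h3
          exact h (by rw [← h3]; exact h2)]
        exact measure_empty
    simp_rw [h2]
    rw [← Finset.sum_filter, Finset.sum_const]
  have hshift : ∀ (s : Fin k → L) (y : Fin μ → L),
      P {ω | N (V ω) = y - A s} = P {ω | N (V ω) = y} := by
    intro s y
    obtain ⟨vs, hvs⟩ := hKL s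
    rw [hcount, hcount]
    congr 1
    apply Finset.card_bij (fun v _ => v + vs)
    · intro v hv
      simp only [Finset.mem_filter, Finset.mem_univ, true_and] at hv ⊢
      rw [hNadd, hv, ← hvs]
      abel
    · intro v₁ h₁ v₂ h₂ hh
      exact add_right_cancel hh
    · intro u hu
      simp only [Finset.mem_filter, Finset.mem_univ, true_and] at hu
      refine ⟨u - vs, ?_, by abel⟩
      simp only [Finset.mem_filter, Finset.mem_univ, true_and]
      have h1 : N (u - vs) + N vs = N u := by
        rw [← hNadd, show u - vs + vs = u from by abel]
      rw [← hvs] at h1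
      rw [← hu]
      have := h1
      rw [eq_sub_iff_add_eq, this]
  -- express joint with Y
  have hSY : ∀ (s : Fin k → L) (y : Fin μ → L),
      {ω | S ω = s ∧ Y ω = y} = {ω | S ω = s ∧ N (V ω) = y - A s} := by
    intro s y
    ext ω
    simp only [Set.mem_setOf_eq]
    constructor
    · rintro ⟨h1, h2⟩
      refine ⟨h1, ?_⟩
      rw [hYdecomp ω, h1] at h2
      rw [← h2]
      abel
    · rintro ⟨h1, h2⟩
      refine ⟨h1, ?_⟩
      rw [hYdecomp ω, h1, h2]
      abel
  have hq' : ∀ y : Fin μ → L, P {ω | Y ω = y} = P {ω | N (V ω) = y} := by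
    intro y
    rw [meas_partition P {ω | Y ω = y} S]
    have hterm : ∀ s, P ({ω | Y ω = y} ∩ {ω | S ω = s})
        = P {ω | S ω = s} * P {ω | N (V ω) = y} := by
      intro s
      rw [show {ω | Y ω = y} ∩ {ω | S ω = s} = {ω | S ω = s ∧ Y ω = y} from by
        ext ω; simp only [Set.mem_inter_iff, Set.mem_setOf_eq]; exact and_comm]
      rw [hSY, hjoint, hshift]
    simp_rw [hterm]
    rw [← Finset.sum_mul, sum_meas_eq_one P S, one_mul]
  apply mutualInfo_eq_zero_of_indep
  intro s y
  rw [hSY, hjoint, hshift, ← hq']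
end

section
/- Let q be a prime power, n and m positive integers, μ an integer with 1 ≤ μ ≤ n − 1, and k = n − μ. Let S be a random variable with values in a finite set 𝒮 and let X be a jointly distributed random variable with values in Fq^{n×m}. Assume: (i) H(S) = k·m·log q (the message has entropy of k packets); (ii) there is a function f : Fq^{n×m} → 𝒮 with S = f(X) almost surely (zero-error communication over a noiseless network); and (iii) I(S; BX) = 0 for every matrix B ∈ Fq^{μ×n} (universal security under μ observations). Then m ≥ n. -/
set_option autoImplicit false

open Matrix MeasureTheory

set_option maxHeartbeats 4000000

open scoped Classical in
private lemma measure_toReal_eq_sum {Ω : Type*} [Fintype Ω] [MeasurableSpace Ω]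
    [MeasurableSingletonClass Ω] (P : Measure Ω) [IsFiniteMeasure P] (A : Set Ω) :
    (P A).toReal = ∑ ω ∈ Finset.univ.filter (· ∈ A), (P {ω}).toReal := by
  have hA : A = ⋃ ω ∈ Finset.univ.filter (· ∈ A), ({ω} : Set Ω) := by
    ext x; simp
  have hdisj : (↑(Finset.univ.filter (· ∈ A)) : Set Ω).PairwiseDisjoint
      (fun ω => ({ω} : Set Ω)) := by
    intro x _ y _ hxy
    simp [Set.disjoint_singleton, hxy]
  nth_rewrite 1 [hA]
  rw [measure_biUnion_finset hdisj (fun b _ => measurableSet_singleton b),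
    ENNReal.toReal_sum (fun a _ => measure_ne_top P _)]

open scoped Classical in
private lemma gibbs_aux {α : Type*} [Fintype α] (w : α → ℝ)
    (h0 : ∀ a, 0 ≤ w a) (h1 : ∑ a, w a = 1) :
    -∑ a, w a * Real.log (w a) ≤
      Real.log ((Finset.univ.filter (fun a => w a ≠ 0)).card) := by
  set T := Finset.univ.filter (fun a => w a ≠ 0) with hT
  have hTsum : ∑ a ∈ T, w a = 1 := by rw [hT, Finset.sum_filter_ne_zero, h1]
  have hTne : (0:ℝ) < (T.card : ℝ) := by
    have : T.Nonempty := by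
      rcases Finset.eq_empty_or_nonempty T with h | h
      · exfalso; rw [h, Finset.sum_empty] at hTsum; norm_num at hTsum
      · exact h
    exact_mod_cast Finset.card_pos.mpr this
  have key : ∀ a ∈ T, w a * (-Real.log (w a)) ≤
      w a * Real.log (T.card : ℝ) + ((T.card : ℝ)⁻¹ - w a) := by
    intro a haT
    have hwa : 0 < w a := lt_of_le_of_ne (h0 a) (by
      symm; simpa [hT, Finset.mem_filter] using haT)
    have hx : (0:ℝ) < ((T.card : ℝ) * w a)⁻¹ := by positivity
    have hlog := Real.log_le_sub_one_of_pos hx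
    have hrw : Real.log (((T.card : ℝ) * w a)⁻¹)
        = -(Real.log (T.card : ℝ) + Real.log (w a)) := by
      rw [Real.log_inv, Real.log_mul (ne_of_gt hTne) (ne_of_gt hwa)]
    rw [hrw] at hlog
    have h5 := mul_le_mul_of_nonneg_left hlog (le_of_lt hwa)
    have h6 : w a * (((T.card : ℝ) * w a)⁻¹ - 1) = (T.card : ℝ)⁻¹ - w a := by
      rw [mul_inv]
      field_simp
    nlinarith [h5, h6]
  have h2 : -∑ a, w a * Real.log (w a) = ∑ a ∈ T, w a * (-Real.log (w a)) := by
    rw [← Finset.sum_neg_distrib]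
    rw [Finset.sum_filter_of_ne (fun x _ hx => by
      intro h; apply hx; rw [h]; ring)]
    congr 1; funext a; ring
  rw [h2]
  calc ∑ a ∈ T, w a * (-Real.log (w a))
      ≤ ∑ a ∈ T, (w a * Real.log (T.card : ℝ) + ((T.card : ℝ)⁻¹ - w a)) :=
        Finset.sum_le_sum key
    _ = (∑ a ∈ T, w a) * Real.log (T.card : ℝ)
        + ((T.card : ℝ) * (T.card : ℝ)⁻¹ - ∑ a ∈ T, w a) := by
        rw [Finset.sum_add_distrib, Finset.sum_sub_distrib, ← Finset.sum_mul]
        simp [Finset.sum_const, nsmul_eq_mul]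
    _ = Real.log (T.card : ℝ) := by
        rw [hTsum, mul_inv_cancel₀ (ne_of_gt hTne)]
        ring

open scoped Classical in
private lemma indep_core {α β : Type*} [Fintype α] [Fintype β]
    (j : α → β → ℝ) (hj0 : ∀ x y, 0 ≤ j x y) (hjs : ∑ x, ∑ y, j x y = 1)
    (hzero : (-∑ x, (∑ y, j x y) * Real.log (∑ y, j x y))
           + (-∑ y, (∑ x, j x y) * Real.log (∑ x, j x y))
           - (-∑ x, ∑ y, j x y * Real.log (j x y)) = 0)
    (a : α) (b : β) (ha : ∑ y, j a y ≠ 0) (hb : ∑ x, j x b ≠ 0) :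
    j a b ≠ 0 := by
  set B : α → ℝ := fun x => ∑ y, j x y with hB
  set C : β → ℝ := fun y => ∑ x, j x y with hC
  have hB0 : ∀ x, 0 ≤ B x := fun x => Finset.sum_nonneg fun y _ => hj0 x y
  have hC0 : ∀ y, 0 ≤ C y := fun y => Finset.sum_nonneg fun x _ => hj0 x y
  have hBs : ∑ x, B x = 1 := hjs
  have hCs : ∑ y, C y = 1 := by rw [hC]; rw [Finset.sum_comm]; exact hjs
  -- rewrite hzero as a double sum
  have hz2 : ∑ x, ∑ y, j x y * (Real.log (j x y) - Real.log (B x) - Real.log (C y)) = 0 := by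
    have e1 : ∑ x, B x * Real.log (B x) = ∑ x, ∑ y, j x y * Real.log (B x) := by
      refine Finset.sum_congr rfl fun x _ => ?_
      rw [hB, Finset.sum_mul]
    have e2 : ∑ y, C y * Real.log (C y) = ∑ x, ∑ y, j x y * Real.log (C y) := by
      rw [Finset.sum_comm]
      refine Finset.sum_congr rfl fun y _ => ?_
      rw [hC, Finset.sum_mul]
    have expand : ∀ x, ∑ y, j x y * (Real.log (j x y) - Real.log (B x) - Real.log (C y))
        = (∑ y, j x y * Real.log (j x y)) - (∑ y, j x y * Real.log (B x))
          - (∑ y, j x y * Real.log (C y)) := by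
      intro x
      rw [← Finset.sum_sub_distrib, ← Finset.sum_sub_distrib]
      refine Finset.sum_congr rfl fun y _ => by ring
    calc ∑ x, ∑ y, j x y * (Real.log (j x y) - Real.log (B x) - Real.log (C y))
        = (∑ x, ∑ y, j x y * Real.log (j x y)) - (∑ x, ∑ y, j x y * Real.log (B x))
          - (∑ x, ∑ y, j x y * Real.log (C y)) := by
          rw [← Finset.sum_sub_distrib, ← Finset.sum_sub_distrib]
          exact Finset.sum_congr rfl fun x _ => expand x
      _ = 0 := by rw [← e1, ← e2]; linarith [hzero]
  -- termwise lower bound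
  have hterm : ∀ x y, j x y - B x * C y ≤ j x y * (Real.log (j x y) - Real.log (B x) - Real.log (C y)) := by
    intro x y
    rcases eq_or_lt_of_le (hj0 x y) with h | h
    · rw [← h]
      simp
      exact mul_nonneg (hB0 x) (hC0 y)
    · have hBx : 0 < B x := lt_of_lt_of_le h (Finset.single_le_sum (fun y _ => hj0 x y) (Finset.mem_univ y))
      have hCy : 0 < C y := lt_of_lt_of_le h (Finset.single_le_sum (fun x _ => hj0 x y) (Finset.mem_univ x))
      have hq : (0:ℝ) < B x * C y / j x y := by positivity
      have hlog := Real.log_le_sub_one_of_pos hq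
      have hrw : Real.log (B x * C y / j x y)
          = Real.log (B x) + Real.log (C y) - Real.log (j x y) := by
        rw [Real.log_div (by positivity) (ne_of_gt h), Real.log_mul (ne_of_gt hBx) (ne_of_gt hCy)]
      rw [hrw] at hlog
      have h5 := mul_le_mul_of_nonneg_left hlog (le_of_lt h)
      have h6 : j x y * (B x * C y / j x y - 1) = B x * C y - j x y := by
        field_simp
      nlinarith [h5, h6]
  -- conclude
  intro hab
  have hstrict : j a b - B a * C b < j a b * (Real.log (j a b) - Real.log (B a) - Real.log (C b)) := by
    rw [hab]
    simp only [zero_mul, zero_sub]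
    have : 0 < B a * C b :=
      mul_pos (lt_of_le_of_ne (hB0 a) (Ne.symm ha)) (lt_of_le_of_ne (hC0 b) (Ne.symm hb))
    linarith
  have hsumlt : ∑ p : α × β, (j p.1 p.2 - B p.1 * C p.2)
      < ∑ p : α × β, j p.1 p.2 * (Real.log (j p.1 p.2) - Real.log (B p.1) - Real.log (C p.2)) := by
    refine Finset.sum_lt_sum (fun p _ => hterm p.1 p.2) ⟨(a, b), Finset.mem_univ _, hstrict⟩
  rw [Fintype.sum_prod_type, Fintype.sum_prod_type] at hsumlt
  have hL : ∑ x, ∑ y, (j x y - B x * C y) = 0 := by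
    have : ∑ x, ∑ y, B x * C y = (∑ x, B x) * (∑ y, C y) := by
      rw [Finset.sum_mul]
      exact Finset.sum_congr rfl fun x _ => by rw [Finset.mul_sum]
    have e : ∑ x, ∑ y, (j x y - B x * C y)
        = (∑ x, ∑ y, j x y) - (∑ x, ∑ y, B x * C y) := by
      rw [← Finset.sum_sub_distrib]
      exact Finset.sum_congr rfl fun x _ => by rw [Finset.sum_sub_distrib]
    rw [e, this, hjs, hCs]
    ring
  rw [hL, hz2] at hsumlt
  exact lt_irrefl _ hsumlt

open scoped Classical in
private lemma sum_fiber {ι κ M : Type*} [Fintype κ] [AddCommMonoid M]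
    (g : ι → κ) (f : ι → M) (s : Finset ι) :
    ∑ j : κ, ∑ i ∈ s.filter (fun i => g i = j), f i = ∑ i ∈ s, f i := by
  have h1 : ∀ j : κ, ∑ i ∈ s.filter (fun i => g i = j), f i
      = ∑ i ∈ s, if g i = j then f i else 0 := fun j => Finset.sum_filter _ _
  rw [Finset.sum_congr rfl (fun j _ => h1 j), Finset.sum_comm]
  refine Finset.sum_congr rfl fun i _ => ?_
  rw [Finset.sum_ite_eq Finset.univ (g i) (fun _ => f i)]
  simp

open scoped Classical in
private lemma sum_fiber_and {ι κ M : Type*} [Fintype ι] [Fintype κ] [AddCommMonoid M]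
    (pr : ι → Prop) (g : ι → κ) (f : ι → M) :
    ∑ b : κ, ∑ i ∈ Finset.univ.filter (fun i => pr i ∧ g i = b), f i
      = ∑ i ∈ Finset.univ.filter pr, f i := by
  have h1 : ∀ b : κ, ∑ i ∈ Finset.univ.filter (fun i => pr i ∧ g i = b), f i
      = ∑ i ∈ Finset.univ, if pr i ∧ g i = b then f i else 0 := fun b => Finset.sum_filter _ _
  rw [Finset.sum_congr rfl (fun b _ => h1 b), Finset.sum_comm, Finset.sum_filter]
  refine Finset.sum_congr rfl fun i _ => ?_
  by_cases hpr : pr i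
  · simp only [hpr, true_and, if_true]
    rw [Finset.sum_ite_eq Finset.univ (g i) (fun _ => f i)]
    simp
  · simp [hpr]

open scoped Classical in
private lemma sum_fiber_and' {ι κ M : Type*} [Fintype ι] [Fintype κ] [AddCommMonoid M]
    (pr : ι → Prop) (g : ι → κ) (f : ι → M) :
    ∑ b : κ, ∑ i ∈ Finset.univ.filter (fun i => g i = b ∧ pr i), f i
      = ∑ i ∈ Finset.univ.filter pr, f i := by
  have h1 : ∀ b : κ, Finset.univ.filter (fun i => g i = b ∧ pr i)
      = Finset.univ.filter (fun i => pr i ∧ g i = b) :=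
    fun b => Finset.filter_congr (fun i _ => and_comm)
  rw [Finset.sum_congr rfl (fun b _ => by rw [h1 b])]
  exact sum_fiber_and pr g f

open scoped Classical in
private lemma measure_marg_right {Ω κ : Type*} [Fintype Ω] [MeasurableSpace Ω]
    [MeasurableSingletonClass Ω] (P : MeasureTheory.Measure Ω) [MeasureTheory.IsFiniteMeasure P]
    [Fintype κ] (pr : Ω → Prop) (g : Ω → κ) :
    ∑ b : κ, (P {ω | pr ω ∧ g ω = b}).toReal = (P {ω | pr ω}).toReal := by
  have hU : {ω | pr ω} = ⋃ b ∈ (Finset.univ : Finset κ), {ω | pr ω ∧ g ω = b} := by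
    ext ω
    simp only [Set.mem_setOf_eq, Set.mem_iUnion, Finset.mem_univ, exists_true_left, true_and]
    exact ⟨fun h => ⟨g ω, h, rfl⟩, fun ⟨b, h, _⟩ => h⟩
  have hdisj : (↑(Finset.univ : Finset κ) : Set κ).PairwiseDisjoint
      (fun b => {ω | pr ω ∧ g ω = b}) := by
    intro b _ b' _ hbb'
    refine Set.disjoint_left.mpr ?_
    rintro ω ⟨_, h1⟩ ⟨_, h2⟩
    exact hbb' (h1 ▸ h2 ▸ rfl)
  have hmeas : ∀ b ∈ (Finset.univ : Finset κ), MeasurableSet {ω | pr ω ∧ g ω = b} :=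
    fun b _ => (Set.toFinite _).measurableSet
  rw [hU, MeasureTheory.measure_biUnion_finset hdisj hmeas,
    ENNReal.toReal_sum (fun b _ => MeasureTheory.measure_ne_top P _)]

open scoped Classical in
private lemma measure_marg_left {Ω κ : Type*} [Fintype Ω] [MeasurableSpace Ω]
    [MeasurableSingletonClass Ω] (P : MeasureTheory.Measure Ω) [MeasureTheory.IsFiniteMeasure P]
    [Fintype κ] (pr : Ω → Prop) (g : Ω → κ) :
    ∑ b : κ, (P {ω | g ω = b ∧ pr ω}).toReal = (P {ω | pr ω}).toReal := by
  have e : ∀ b : κ, (P {ω | g ω = b ∧ pr ω}) = (P {ω | pr ω ∧ g ω = b}) := by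
    intro b
    congr 1
    ext ω
    exact and_comm
  rw [Finset.sum_congr rfl (fun b _ => by rw [e b])]
  exact measure_marg_right P pr g

private lemma exists_surj_ker_le (F : Type*) [Field F] (n μ : ℕ) (hμ : μ ≤ n)
    (V : Submodule F (Fin n → F)) (hV : Module.finrank F V ≤ n - μ) :
    ∃ g : (Fin n → F) →ₗ[F] (Fin μ → F), Function.Surjective g ∧ V ≤ LinearMap.ker g := by
  have hfr : Module.finrank F ((Fin n → F) ⧸ V) + Module.finrank F V = n := by
    rw [Submodule.finrank_quotient_add_finrank]
    simp [Module.finrank_pi]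
  have hQ : μ ≤ Module.finrank F ((Fin n → F) ⧸ V) := by omega
  let bQ := Module.finBasis F ((Fin n → F) ⧸ V)
  let e : ((Fin n → F) ⧸ V) ≃ₗ[F] (Fin (Module.finrank F ((Fin n → F) ⧸ V)) → F) :=
    bQ.repr.trans (Finsupp.linearEquivFunOnFinite F F _)
  let π : (Fin (Module.finrank F ((Fin n → F) ⧸ V)) → F) →ₗ[F] (Fin μ → F) :=
    LinearMap.funLeft F F (Fin.castLE hQ)
  refine ⟨(π.comp e.toLinearMap).comp V.mkQ, ?_, ?_⟩
  · exact ((LinearMap.funLeft_surjective_of_injective F F _ (Fin.castLE_injective hQ)).comp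
      e.surjective).comp (Submodule.mkQ_surjective V)
  · intro v hv
    simp only [LinearMap.mem_ker, LinearMap.comp_apply]
    have : V.mkQ v = 0 := (Submodule.Quotient.mk_eq_zero V).mpr hv
    rw [this]
    simp

/-- Converse for noiseless wiretap networks: if the message `S` has entropy `k = n - μ`
packets, can be recovered from `X` (zero error), and `I(S;BX) = 0` for every
`B ∈ F^{μ×n}` (universal security under `μ` observations), then `m ≥ n`. -/
theorem universal_secure_noiseless_requires_long_packets
    (q : ℕ) (hq : IsPrimePow q) (n m : ℕ) (hn : 0 < n) (hm : 0 < m)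
    (μ : ℕ) (hμ1 : 1 ≤ μ) (hμn : μ ≤ n - 1)
    (F : Type) [Field F] [Fintype F] (hF : Fintype.card F = q)
    (𝒮 : Type) [Fintype 𝒮]
    (Ω : Type) [Fintype Ω] [MeasurableSpace Ω] [MeasurableSingletonClass Ω]
    (P : Measure Ω) [IsProbabilityMeasure P]
    (S : Ω → 𝒮) (X : Ω → Matrix (Fin n) (Fin m) F)
    (hent : entropy P S = ((n - μ : ℕ) : ℝ) * (m * Real.log q))
    (hdec : ∃ f : Matrix (Fin n) (Fin m) F → 𝒮, ∀ᵐ ω ∂P, S ω = f (X ω))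
    (hsec : ∀ B : Matrix (Fin μ) (Fin n) F,
      mutualInfo P S (fun ω => B * X ω) = 0) :
    n ≤ m := by
  classical
  obtain ⟨f, hf⟩ := hdec
  set k := n - μ with hk
  have hk1 : 1 ≤ k := by omega
  have hμle : μ ≤ n := by omega
  have hq2 : 2 ≤ q := hq.two_le
  set p : Ω → ℝ := fun ω => (P {ω}).toReal with hpdef
  have hp0 : ∀ ω, 0 ≤ p ω := fun ω => ENNReal.toReal_nonneg
  -- workhorse: probability of a predicate-set as a finite sum
  have hPrP : ∀ (pr : Ω → Prop), (P {ω | pr ω}).toReal = ∑ ω ∈ Finset.univ.filter pr, p ω := by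
    intro pr
    rw [measure_toReal_eq_sum]
    rfl
  have hpsum : ∑ ω, p ω = 1 := by
    have h1 := measure_toReal_eq_sum P Set.univ
    rw [measure_univ] at h1
    simp only [Set.mem_univ, Finset.filter_true] at h1
    simpa using h1.symm
  have hPr_pos : ∀ (pr : Ω → Prop) (ω : Ω), pr ω → p ω ≠ 0 →
      (P {ω' | pr ω'}).toReal ≠ 0 := by
    intro pr ω hpr hω
    rw [hPrP]
    have hmem : ω ∈ Finset.univ.filter pr :=
      Finset.mem_filter.mpr ⟨Finset.mem_univ ω, hpr⟩
    have h1 : p ω ≤ ∑ ω' ∈ Finset.univ.filter pr, p ω' :=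
      Finset.single_le_sum (fun i _ => hp0 i) hmem
    have h2 : 0 < p ω := lt_of_le_of_ne (hp0 ω) (Ne.symm hω)
    linarith
  have hPr_wit : ∀ (pr : Ω → Prop), (P {ω' | pr ω'}).toReal ≠ 0 →
      ∃ ω, pr ω ∧ p ω ≠ 0 := by
    intro pr h
    rw [hPrP] at h
    by_contra hc
    push_neg at hc
    exact h (Finset.sum_eq_zero (fun ω hω => by
      rcases em (pr ω) with h1 | h1
      · exact hc ω h1
      · simp only [Finset.mem_filter, Finset.mem_univ, true_and] at hω
        exact absurd hω h1))
  -- a.s. decoding holds at every point of positive probability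
  have hfae : ∀ ω, p ω ≠ 0 → S ω = f (X ω) := by
    intro ω hω
    by_contra hne
    have h0 : P {ω' | ¬ S ω' = f (X ω')} = 0 := ae_iff.mp hf
    have hle : P {ω} ≤ P {ω' | ¬ S ω' = f (X ω')} :=
      measure_mono (by intro x hx; simp only [Set.mem_singleton_iff] at hx; subst hx; exact hne)
    rw [h0, le_zero_iff] at hle
    exact hω (by simp [hpdef, hle])
  -- the support of S is large
  set ps : 𝒮 → ℝ := fun s => (P {ω | S ω = s}).toReal with hpsdef
  set sFin : Finset 𝒮 := Finset.univ.filter (fun s => ps s ≠ 0) with hsFin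
  have hps_sum : ∑ s, ps s = 1 := by
    have : ∀ s, ps s = ∑ ω ∈ Finset.univ.filter (fun ω => S ω = s), p ω := fun s => hPrP _
    rw [Finset.sum_congr rfl (fun s _ => this s), sum_fiber S p Finset.univ, hpsum]
  have hsFin_card : q ^ (k * m) ≤ sFin.card := by
    have hgibbs := gibbs_aux ps (fun s => ENNReal.toReal_nonneg) hps_sum
    have hent2 : Real.log ((q : ℝ) ^ (k * m)) ≤ Real.log (sFin.card : ℝ) := by
      rw [Real.log_pow]
      calc ((k * m : ℕ) : ℝ) * Real.log q = ((k : ℕ) : ℝ) * (m * Real.log q) := by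
            push_cast; ring
        _ = entropy P S := hent.symm
        _ = -∑ s, ps s * Real.log (ps s) := rfl
        _ ≤ _ := hgibbs
    have hqpos : (0:ℝ) < (q:ℝ) ^ (k * m) := by positivity
    have hcardpos : (0:ℝ) < (sFin.card : ℝ) := by
      have : sFin.Nonempty := by
        rcases Finset.eq_empty_or_nonempty sFin with h | h
        · exfalso
          have : ∑ s, ps s = 0 := Finset.sum_eq_zero (fun s _ => by
            by_contra hc
            have : s ∈ sFin := by simp [hsFin, hc]
            rw [h] at this; simp at this)
          rw [hps_sum] at this; norm_num at this
        · exact h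
      exact_mod_cast Finset.card_pos.mpr this
    have := (Real.log_le_log_iff hqpos hcardpos).mp hent2
    exact_mod_cast this
  -- independence: joint positivity
  have hKEY : ∀ (B : Matrix (Fin μ) (Fin n) F) (s : 𝒮) (y : Matrix (Fin μ) (Fin m) F),
      ps s ≠ 0 → (P {ω | B * X ω = y}).toReal ≠ 0 →
      (P {ω | S ω = s ∧ B * X ω = y}).toReal ≠ 0 := by
    intro B s y hs hy
    set j : 𝒮 → Matrix (Fin μ) (Fin m) F → ℝ :=
      fun a b => (P {ω | S ω = a ∧ B * X ω = b}).toReal with hjdef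
    have hj0 : ∀ a b, 0 ≤ j a b := fun a b => ENNReal.toReal_nonneg
    have hmargS : ∀ a, ∑ b, j a b = ps a := by
      intro a
      exact measure_marg_right P (fun ω => S ω = a) (fun ω => B * X ω)
    have hmargY : ∀ b, ∑ a, j a b = (P {ω | B * X ω = b}).toReal := by
      intro b
      exact measure_marg_left P (fun ω => B * X ω = b) S
    have hjs : ∑ a, ∑ b, j a b = 1 := by
      rw [Finset.sum_congr rfl fun a _ => hmargS a, hps_sum]
    have e1 : entropy P S = -∑ a, (∑ b, j a b) * Real.log (∑ b, j a b) := by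
      unfold entropy
      congr 1
      exact Finset.sum_congr rfl fun a _ => by rw [hmargS a]
    have e2 : entropy P (fun ω => B * X ω)
        = -∑ b, (∑ a, j a b) * Real.log (∑ a, j a b) := by
      unfold entropy
      congr 1
      exact Finset.sum_congr rfl fun b _ => by rw [hmargY b]
    have e3 : entropy P (fun ω => (S ω, B * X ω))
        = -∑ a, ∑ b, j a b * Real.log (j a b) := by
      have hset : ∀ (c : 𝒮 × Matrix (Fin μ) (Fin m) F),
          {ω | (S ω, B * X ω) = c} = {ω | S ω = c.1 ∧ B * X ω = c.2} := by
        intro c; ext ω; simp [Prod.ext_iff]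
      calc entropy P (fun ω => (S ω, B * X ω))
          = -∑ c : 𝒮 × Matrix (Fin μ) (Fin m) F, j c.1 c.2 * Real.log (j c.1 c.2) := by
            unfold entropy
            congr 1
            refine Finset.sum_congr rfl fun c _ => ?_
            rw [hset c]
        _ = -∑ a, ∑ b, j a b * Real.log (j a b) := by rw [Fintype.sum_prod_type]
    have hzero : (-∑ a, (∑ b, j a b) * Real.log (∑ b, j a b))
           + (-∑ b, (∑ a, j a b) * Real.log (∑ a, j a b))
           - (-∑ a, ∑ b, j a b * Real.log (j a b)) = 0 := by
      have hI := hsec B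
      unfold mutualInfo at hI
      rw [e1, e2, e3] at hI
      linarith
    exact indep_core j hj0 hjs hzero s y
      (by rw [hmargS]; exact hs) (by rw [hmargY]; exact hy)
  -- matrix-entry formula for toMatrix'
  have hentry : ∀ (g : (Fin n → F) →ₗ[F] (Fin μ → F)) (u : Matrix (Fin n) (Fin m) F)
      (i : Fin μ) (jj : Fin m),
      (LinearMap.toMatrix' g * u) i jj = g (fun l => u l jj) i := by
    intro g u i jj
    calc (LinearMap.toMatrix' g * u) i jj
        = ((LinearMap.toMatrix' g).mulVec (fun l => u l jj)) i := by
          rw [Matrix.mul_apply]; rfl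
      _ = (Matrix.toLin' (LinearMap.toMatrix' g)) (fun l => u l jj) i := by
          rw [Matrix.toLin'_apply]
      _ = g (fun l => u l jj) i := by rw [Matrix.toLin'_toMatrix']
  have hBcol : ∀ (g : (Fin n → F) →ₗ[F] (Fin μ → F)) (z w : Matrix (Fin n) (Fin m) F),
      LinearMap.toMatrix' g * z = LinearMap.toMatrix' g * w ↔
        ∀ jj : Fin m, g (fun l => z l jj - w l jj) = 0 := by
    intro g z w
    constructor
    · intro h jj
      have h2 : g (fun l => z l jj) - g (fun l => w l jj) = 0 := by
        rw [sub_eq_zero]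
        funext i
        rw [← hentry g z i jj, ← hentry g w i jj, h]
      rw [← h2, ← map_sub]
      rfl
    · intro h
      ext i jj
      rw [hentry, hentry]
      have h2 : g (fun l => z l jj) - g (fun l => w l jj) = 0 := by
        rw [← map_sub]
        exact h jj
      have h3 := sub_eq_zero.mp h2
      rw [h3]
  -- cardinality of cosets
  have hcosetcard : ∀ (g : (Fin n → F) →ₗ[F] (Fin μ → F)), Function.Surjective g →
      ∀ x₀ : Matrix (Fin n) (Fin m) F,
      (Finset.univ.filter (fun x : Matrix (Fin n) (Fin m) F =>
        LinearMap.toMatrix' g * x = LinearMap.toMatrix' g * x₀)).card = q ^ (k * m) := by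
    intro g hg x₀
    have hker : Nat.card (LinearMap.ker g) = q ^ k := by
      have h1 := Submodule.card_eq_card_quotient_mul_card (LinearMap.ker g)
      have h2 : Nat.card ((Fin n → F) ⧸ LinearMap.ker g) = Nat.card (Fin μ → F) :=
        Nat.card_congr (g.quotKerEquivOfSurjective hg).toEquiv
      rw [h2] at h1
      have hcn : Nat.card (Fin n → F) = q ^ n := by
        rw [Nat.card_fun]
        simp [Nat.card_eq_fintype_card, hF]
      have hcμ : Nat.card (Fin μ → F) = q ^ μ := by
        rw [Nat.card_fun]
        simp [Nat.card_eq_fintype_card, hF]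
      rw [hcn, hcμ] at h1
      have hsplit : q ^ k * q ^ μ = q ^ n := by rw [← pow_add]; congr 1; omega
      have hqμ : 0 < q ^ μ := pow_pos (by omega) μ
      have h3 : Nat.card (LinearMap.ker g) * q ^ μ = q ^ k * q ^ μ := by
        rw [hsplit, ← h1]
      exact Nat.eq_of_mul_eq_mul_right hqμ h3
    -- equivalence between the coset and (Fin m -> ker g)
    have hEq : Nat.card {x : Matrix (Fin n) (Fin m) F //
        LinearMap.toMatrix' g * x = LinearMap.toMatrix' g * x₀} = q ^ (k * m) := by
      have e : {x : Matrix (Fin n) (Fin m) F //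
          LinearMap.toMatrix' g * x = LinearMap.toMatrix' g * x₀}
          ≃ (Fin m → LinearMap.ker g) :=
        { toFun := fun x jj => ⟨fun l => x.1 l jj - x₀ l jj,
            LinearMap.mem_ker.mpr ((hBcol g x.1 x₀).mp x.2 jj)⟩
          invFun := fun c => ⟨Matrix.of (fun l jj => x₀ l jj + (c jj).1 l), by
            refine (hBcol g _ x₀).mpr fun jj => ?_
            have h0 : (fun l => (Matrix.of (fun l jj => x₀ l jj + (c jj).1 l)) l jj - x₀ l jj)
                = (c jj).1 := by
              funext l
              simp [Matrix.of_apply]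
            rw [h0]
            exact LinearMap.mem_ker.mp (c jj).2⟩
          left_inv := fun x => by
            apply Subtype.ext
            ext l jj
            simp [Matrix.of_apply]
          right_inv := fun c => by
            funext jj
            apply Subtype.ext
            funext l
            simp [Matrix.of_apply] }
      rw [Nat.card_congr e, Nat.card_fun, hker, Nat.card_eq_fintype_card, Fintype.card_fin,
        ← pow_mul]
    rw [← hEq, Nat.card_eq_fintype_card, Fintype.card_subtype]
  -- the central coset lemma
  have main_coset : ∀ (g : (Fin n → F) →ₗ[F] (Fin μ → F)), Function.Surjective g →
      ∀ x₀ : Matrix (Fin n) (Fin m) F, (∃ ω, p ω ≠ 0 ∧ X ω = x₀) →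
      (∀ c, LinearMap.toMatrix' g * c = LinearMap.toMatrix' g * x₀ →
          (∃ ω, p ω ≠ 0 ∧ X ω = c)) ∧
      (∀ c c', LinearMap.toMatrix' g * c = LinearMap.toMatrix' g * x₀ →
          LinearMap.toMatrix' g * c' = LinearMap.toMatrix' g * x₀ → f c = f c' → c = c') ∧
      (∀ s, ps s ≠ 0 → ∃ c, LinearMap.toMatrix' g * c = LinearMap.toMatrix' g * x₀ ∧ f c = s) := by
    intro g hg x₀ hx₀
    obtain ⟨ω₀, hω₀p, hω₀x⟩ := hx₀
    have hy0 : (P {ω | LinearMap.toMatrix' g * X ω = LinearMap.toMatrix' g * x₀}).toReal ≠ 0 :=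
      hPr_pos _ ω₀ (by rw [hω₀x]) hω₀p
    have hchoice : ∀ s, ps s ≠ 0 → ∃ x : Matrix (Fin n) (Fin m) F,
        (∃ ω, p ω ≠ 0 ∧ X ω = x) ∧
        LinearMap.toMatrix' g * x = LinearMap.toMatrix' g * x₀ ∧ f x = s := by
      intro s hs
      obtain ⟨ω, ⟨hωS, hωB⟩, hωp⟩ := hPr_wit _
        (hKEY (LinearMap.toMatrix' g) s (LinearMap.toMatrix' g * x₀) hs hy0)
      exact ⟨X ω, ⟨ω, hωp, rfl⟩, hωB, by rw [← hfae ω hωp, hωS]⟩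
    set φ : 𝒮 → Matrix (Fin n) (Fin m) F := fun s =>
      if h : ps s ≠ 0 then Classical.choose (hchoice s h) else x₀ with hφdef
    have hφ : ∀ s, ∀ h : ps s ≠ 0, (∃ ω, p ω ≠ 0 ∧ X ω = φ s) ∧
        LinearMap.toMatrix' g * φ s = LinearMap.toMatrix' g * x₀ ∧ f (φ s) = s := by
      intro s h
      simp only [hφdef, dif_pos h]
      exact Classical.choose_spec (hchoice s h)
    set CFin := Finset.univ.filter (fun x : Matrix (Fin n) (Fin m) F =>
      LinearMap.toMatrix' g * x = LinearMap.toMatrix' g * x₀) with hCFin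
    have hCcard : CFin.card = q ^ (k * m) := hcosetcard g hg x₀
    have hinj : Set.InjOn φ ↑sFin := by
      intro s hs t ht hst
      have hs' : ps s ≠ 0 := (Finset.mem_filter.mp (Finset.mem_coe.mp hs)).2
      have ht' : ps t ≠ 0 := (Finset.mem_filter.mp (Finset.mem_coe.mp ht)).2
      rw [← (hφ s hs').2.2, ← (hφ t ht').2.2, hst]
    have hsub : Finset.image φ sFin ⊆ CFin := by
      intro c hc
      obtain ⟨s, hs, rfl⟩ := Finset.mem_image.mp hc
      have hs' : ps s ≠ 0 := (Finset.mem_filter.mp hs).2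
      rw [hCFin]
      exact Finset.mem_filter.mpr ⟨Finset.mem_univ _, (hφ s hs').2.1⟩
    have himcard : CFin.card ≤ (Finset.image φ sFin).card := by
      rw [Finset.card_image_of_injOn hinj, hCcard]
      exact hsFin_card
    have heq : Finset.image φ sFin = CFin := Finset.eq_of_subset_of_card_le hsub himcard
    have hmem : ∀ c, LinearMap.toMatrix' g * c = LinearMap.toMatrix' g * x₀ →
        ∃ s, ps s ≠ 0 ∧ φ s = c := by
      intro c hc
      have hcC : c ∈ CFin := by
        rw [hCFin]
        exact Finset.mem_filter.mpr ⟨Finset.mem_univ _, hc⟩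
      rw [← heq] at hcC
      obtain ⟨s, hs, hsc⟩ := Finset.mem_image.mp hcC
      exact ⟨s, (Finset.mem_filter.mp hs).2, hsc⟩
    refine ⟨?_, ?_, ?_⟩
    · intro c hc
      obtain ⟨s, hs, rfl⟩ := hmem c hc
      exact (hφ s hs).1
    · intro c c' hc hc' hcc
      obtain ⟨s, hs, rfl⟩ := hmem c hc
      obtain ⟨s', hs', rfl⟩ := hmem c' hc'
      have : s = s' := by rw [← (hφ s hs).2.2, ← (hφ s' hs').2.2, hcc]
      rw [this]
    · intro s hs
      exact ⟨φ s, (hφ s hs).2.1, (hφ s hs).2.2⟩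
  -- a point of positive probability
  obtain ⟨ω₁, hω₁⟩ : ∃ ω, p ω ≠ 0 := by
    by_contra hc
    push_neg at hc
    rw [Finset.sum_eq_zero (fun ω _ => hc ω)] at hpsum
    norm_num at hpsum
  -- single-column modification step
  have hstep : ∀ (x' : Matrix (Fin n) (Fin m) F), (∃ ω, p ω ≠ 0 ∧ X ω = x') →
      ∀ (x : Matrix (Fin n) (Fin m) F) (a : Fin m), (∀ jj, jj ≠ a → ∀ i, x i jj = x' i jj) →
      ∃ ω, p ω ≠ 0 ∧ X ω = x := by
    intro x' hx' x a hagree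
    set d : Fin n → F := fun i => x i a - x' i a with hd
    have hVr : Module.finrank F (Submodule.span F {d}) ≤ n - μ := by
      have h1 : Module.finrank F (Submodule.span F ({d} : Set (Fin n → F))) ≤ 1 := by
        have h2 := finrank_span_finset_le_card (R := F) ({d} : Finset (Fin n → F))
        simp only [Set.finrank] at h2
        convert h2 using 4 <;> simp
      omega
    obtain ⟨g, hg, hker⟩ := exists_surj_ker_le F n μ hμle (Submodule.span F {d}) hVr
    have hBxx : LinearMap.toMatrix' g * x = LinearMap.toMatrix' g * x' := by
      refine (hBcol g x x').mpr fun jj => ?_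
      by_cases hja : jj = a
      · subst hja
        exact LinearMap.mem_ker.mp (hker (Submodule.mem_span_singleton_self d))
      · have hz : (fun l => x l jj - x' l jj) = (0 : Fin n → F) := by
          funext l
          simp [hagree jj hja l]
        rw [hz]
        exact map_zero g
    exact (main_coset g hg x' hx').1 x hBxx
  -- every matrix is in the support of X
  have hall : ∀ x : Matrix (Fin n) (Fin m) F, ∃ ω, p ω ≠ 0 ∧ X ω = x := by
    have hind : ∀ (t : Finset (Fin m)) (x : Matrix (Fin n) (Fin m) F),
        (∀ jj, jj ∉ t → ∀ i, x i jj = X ω₁ i jj) → ∃ ω, p ω ≠ 0 ∧ X ω = x := by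
      intro t
      induction t using Finset.induction_on with
      | empty =>
        intro x hx
        exact ⟨ω₁, hω₁, by ext i jj; exact (hx jj (by simp) i).symm⟩
      | @insert a t ha ih =>
        intro x hx
        set x'' : Matrix (Fin n) (Fin m) F :=
          Matrix.of (fun i jj => if jj = a then X ω₁ i jj else x i jj) with hx''
        have h1 : ∀ jj, jj ∉ t → ∀ i, x'' i jj = X ω₁ i jj := by
          intro jj hjj i
          by_cases hja : jj = a
          · simp [hx'', hja]
          · have hnot : jj ∉ insert a t := by simp [hja, hjj]
            simp only [hx'', Matrix.of_apply, if_neg hja]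
            exact hx jj hnot i
        refine hstep x'' (ih x'' h1) x a ?_
        intro jj hja i
        simp [hx'', hja]
    intro x
    exact hind Finset.univ x (fun jj hjj i => absurd (Finset.mem_univ jj) hjj)
  -- fix a message in the support
  have hs₀ : ps (S ω₁) ≠ 0 := hPr_pos _ ω₁ rfl hω₁
  -- base surjection
  obtain ⟨g₀, hg₀, -⟩ := exists_surj_ker_le F n μ hμle ⊥ (by rw [finrank_bot]; omega)
  -- section ψ of B₀ restricted to the fiber f⁻¹(s₀)
  have hψex : ∀ y : Matrix (Fin μ) (Fin m) F,
      ∃ c, LinearMap.toMatrix' g₀ * c = y ∧ f c = S ω₁ := by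
    intro y
    have hxany : ∃ x : Matrix (Fin n) (Fin m) F, LinearMap.toMatrix' g₀ * x = y := by
      choose v hv using fun jj : Fin m => hg₀ (fun i => y i jj)
      refine ⟨Matrix.of (fun l jj => v jj l), ?_⟩
      ext i jj
      rw [hentry g₀ _ i jj]
      have : (fun l => (Matrix.of fun l jj => v jj l) l jj) = v jj := rfl
      rw [this, hv jj]
    obtain ⟨xa, hxa⟩ := hxany
    obtain ⟨c, hc1, hc2⟩ := (main_coset g₀ hg₀ xa (hall xa)).2.2 (S ω₁) hs₀
    exact ⟨c, by rw [hc1, hxa], hc2⟩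
  choose ψ hψ1 hψ2 using hψex
  -- the column-puncturing map is injective
  set Φ : Matrix (Fin μ) (Fin m) F → Matrix (Fin n) (Fin (m - k)) F :=
    fun y => Matrix.of (fun i j' => ψ y i ⟨k + j'.1, by have := j'.2; omega⟩) with hΦ
  have hΦinj : Function.Injective Φ := by
    intro y y' hyy
    have hcols : ∀ jj : Fin m, k ≤ jj.1 → ∀ i, ψ y i jj = ψ y' i jj := by
      intro jj hjj i
      have hj2 : jj.1 < m := jj.2
      have hlt : jj.1 - k < m - k := by omega
      have h2 : Φ y i ⟨jj.1 - k, hlt⟩ = Φ y' i ⟨jj.1 - k, hlt⟩ := by rw [hyy]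
      have h3 : (⟨k + (jj.1 - k), by omega⟩ : Fin m) = jj :=
        Fin.ext (show k + (jj.1 - k) = jj.1 by omega)
      simpa only [hΦ, Matrix.of_apply, h3] using h2
    set dset : Finset (Fin n → F) := (Finset.univ.filter (fun jj : Fin m => jj.1 < k)).image
      (fun jj => fun l => ψ y l jj - ψ y' l jj) with hdset
    have hVr : Module.finrank F (Submodule.span F (dset : Set (Fin n → F))) ≤ n - μ := by
      have h1 := finrank_span_finset_le_card (R := F) dset
      have h2 : dset.card ≤ k := by
        refine le_trans Finset.card_image_le ?_
        have h3 : (Finset.univ.filter (fun jj : Fin m => jj.1 < k)).card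
            ≤ (Finset.univ : Finset (Fin k)).card := by
          refine Finset.card_le_card_of_injOn
            (fun jj => ⟨jj.1 % k, Nat.mod_lt _ (by omega)⟩) (fun a _ => Finset.mem_univ _) ?_
          intro a haa b hbb hab
          have ha' : a.1 < k := (Finset.mem_filter.mp (Finset.mem_coe.mp haa)).2
          have hb' : b.1 < k := (Finset.mem_filter.mp (Finset.mem_coe.mp hbb)).2
          have := congrArg Fin.val hab
          simp only [Nat.mod_eq_of_lt ha', Nat.mod_eq_of_lt hb'] at this
          exact Fin.ext this
        simpa using h3
      have h4 : Module.finrank F (Submodule.span F (dset : Set (Fin n → F)))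
          = Set.finrank F (dset : Set (Fin n → F)) := rfl
      omega
    obtain ⟨g₁, hg₁, hker₁⟩ := exists_surj_ker_le F n μ hμle _ hVr
    have hByy : LinearMap.toMatrix' g₁ * ψ y' = LinearMap.toMatrix' g₁ * ψ y := by
      refine (hBcol g₁ _ _).mpr fun jj => ?_
      by_cases hjk : jj.1 < k
      · have hmem : (fun l => ψ y' l jj - ψ y l jj) ∈ Submodule.span F (dset : Set (Fin n → F)) := by
          have hmem2 : (fun l => ψ y l jj - ψ y' l jj) ∈ dset := by
            rw [hdset]
            exact Finset.mem_image.mpr ⟨jj, Finset.mem_filter.mpr ⟨Finset.mem_univ _, hjk⟩, rfl⟩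
          have := Submodule.subset_span (R := F) hmem2
          have hnegmem := Submodule.neg_mem _ this
          have hfun : -(fun l => ψ y l jj - ψ y' l jj) = (fun l => ψ y' l jj - ψ y l jj) := by
            funext l
            simp only [Pi.neg_apply]
            ring
          rwa [hfun] at hnegmem
        exact LinearMap.mem_ker.mp (hker₁ hmem)
      · have hz : (fun l => ψ y' l jj - ψ y l jj) = (0 : Fin n → F) := by
          funext l
          rw [hcols jj (by omega) l]
          simp
        rw [hz]
        exact map_zero g₁
    have hψeq : ψ y' = ψ y :=
      (main_coset g₁ hg₁ (ψ y) (hall _)).2.1 (ψ y') (ψ y) hByy rfl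
        (by rw [hψ2 y', hψ2 y])
    rw [← hψ1 y, ← hψ1 y', hψeq]
  -- cardinality comparison
  have hcard : Fintype.card (Matrix (Fin μ) (Fin m) F)
      ≤ Fintype.card (Matrix (Fin n) (Fin (m - k)) F) :=
    Fintype.card_le_of_injective Φ hΦinj
  have hcA : Fintype.card (Matrix (Fin μ) (Fin m) F) = q ^ (μ * m) := by
    rw [show Fintype.card (Matrix (Fin μ) (Fin m) F)
      = Nat.card (Fin μ → Fin m → F) from (Nat.card_eq_fintype_card).symm]
    rw [Nat.card_fun, Nat.card_fun]
    simp only [Nat.card_eq_fintype_card, hF, Fintype.card_fin]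
    rw [← pow_mul, Nat.mul_comm m μ]
  have hcB : Fintype.card (Matrix (Fin n) (Fin (m - k)) F) = q ^ (n * (m - k)) := by
    rw [show Fintype.card (Matrix (Fin n) (Fin (m - k)) F)
      = Nat.card (Fin n → Fin (m - k) → F) from (Nat.card_eq_fintype_card).symm]
    rw [Nat.card_fun, Nat.card_fun]
    simp only [Nat.card_eq_fintype_card, hF, Fintype.card_fin]
    rw [← pow_mul, Nat.mul_comm (m - k) n]
  rw [hcA, hcB] at hcard
  have hle : μ * m ≤ n * (m - k) := (Nat.pow_le_pow_iff_right (by omega)).mp hcard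
  -- final arithmetic
  rcases Nat.lt_or_ge k m with hkm | hkm
  · have e1 : μ * m + k * m = n * m := by
      rw [← Nat.add_mul]
      congr 1
      omega
    have e2 : n * (m - k) + n * k = n * m := by
      rw [← Nat.mul_add]
      congr 1
      omega
    have h6 : μ * m + n * k ≤ n * (m - k) + n * k := Nat.add_le_add_right hle _
    rw [e2, ← e1] at h6
    have h7 : n * k ≤ k * m := Nat.le_of_add_le_add_left h6
    have h8 : k * n ≤ k * m := by rw [Nat.mul_comm k n]; exact h7
    exact Nat.le_of_mul_le_mul_left h8 (by omega)
  · exfalso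
    have hz : m - k = 0 := by omega
    rw [hz, Nat.mul_zero, Nat.le_zero] at hle
    rcases Nat.mul_eq_zero.mp hle with h | h <;> omega
end

section
/- Let q be a prime power and L a field extension of Fq of degree m with m ≥ n. Let k, μ, t, ρ be nonnegative integers with k ≥ 1 and k ≤ n − 2t − ρ − μ. Let G ∈ L^{(k+μ)×n} have rank k + μ, suppose the code C = {G^T u : u ∈ L^{k+μ}} has minimum rank distance n − (k+μ) + 1, and suppose the code generated by the last μ rows G₂ of G, namely {G₂^T v : v ∈ L^{μ}}, has minimum rank distance n − μ + 1 (both MRD). Let S be a random variable with values in L^k, let V be uniformly distributed on L^{μ} and independent of S, let U = (S; V) ∈ L^{k+μ} (stacked column vector), and let X = G^T U. Identify L^n with Fq^{n×m} via a fixed Fq-basis of L. Then: (a) for all distinct u₁, u₂ ∈ L^{k+μ}, the fan-out sets Y^{ρ,t}_{G^T u₁} and Y^{ρ,t}_{G^T u₂} (of the corresponding matrices in Fq^{n×m}) are disjoint; and (b) for every matrix B ∈ Fq^{μ×n} (acting on L^n via the embedding Fq ⊆ L), I(S; BX) = 0. -/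
set_option autoImplicit false
set_option maxHeartbeats 1000000

open Matrix MeasureTheory

/-- The fan-out set `Y^{ρ,t}_x`. -/
def fanOut {F : Type*} [Field F] [Fintype F] {n m : ℕ} (ρ t : ℕ)
    (x : Matrix (Fin n) (Fin m) F) :
    Set (Matrix (Fin n) (Fin n) F × Matrix (Fin n) (Fin m) F) :=
  {p | n - ρ ≤ p.1.rank ∧ ∃ Z : Matrix (Fin n) (Fin m) F, Z.rank ≤ t ∧ p.2 = p.1 * x + Z}

/-- The identification of `L^n` with `F^{n×m}` via a fixed `F`-basis `b` of `L`. -/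
noncomputable def toMat {F L : Type*} [Field F] [Field L] [Algebra F L] {n m : ℕ}
    (b : Module.Basis (Fin m) F L) (x : Fin n → L) : Matrix (Fin n) (Fin m) F :=
  fun i j => b.repr (x i) j

/-- The last `μ` rows of `G ∈ L^{(k+μ)×n}`. -/
def lastRowsOfG {L : Type*} {k μ n : ℕ} (G : Matrix (Fin (k + μ)) (Fin n) L) :
    Matrix (Fin μ) (Fin n) L :=
  G.submatrix (fun i : Fin μ => (⟨k + (i : ℕ), by have := i.isLt; omega⟩ : Fin (k + μ))) id

section MatrixAux

variable {F : Type*} [Field F]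

lemma aux_rank_add_le {n m : ℕ} (A B : Matrix (Fin n) (Fin m) F) :
    (A + B).rank ≤ A.rank + B.rank := by
  classical
  have hle : LinearMap.range (A + B).mulVecLin ≤
      LinearMap.range A.mulVecLin ⊔ LinearMap.range B.mulVecLin := by
    rintro x ⟨v, rfl⟩
    rw [mulVecLin_add]
    exact Submodule.add_mem_sup (LinearMap.mem_range_self _ v) (LinearMap.mem_range_self _ v)
  calc (A + B).rank ≤ Module.finrank F
        (LinearMap.range A.mulVecLin ⊔ LinearMap.range B.mulVecLin : Submodule F (Fin n → F)) :=
        Submodule.finrank_mono hle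
    _ ≤ A.rank + B.rank := Submodule.finrank_add_le_finrank_add_finrank _ _

lemma aux_rank_neg {n m : ℕ} (A : Matrix (Fin n) (Fin m) F) : (-A).rank = A.rank := by
  classical
  have : LinearMap.range (-A).mulVecLin = LinearMap.range A.mulVecLin := by
    apply le_antisymm
    · rintro x ⟨v, rfl⟩; exact ⟨-v, by simp [mulVecLin, Matrix.mulVec_neg, Matrix.neg_mulVec]⟩
    · rintro x ⟨v, rfl⟩; exact ⟨-v, by simp [mulVecLin, Matrix.mulVec_neg, Matrix.neg_mulVec]⟩
  unfold Matrix.rank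
  rw [this]

/-- Sylvester-type lower bound on the rank of a product. -/
lemma aux_rank_le_rank_mul_add {n m : ℕ} (A : Matrix (Fin n) (Fin n) F)
    (M : Matrix (Fin n) (Fin m) F) :
    M.rank ≤ (A * M).rank + (n - A.rank) := by
  classical
  set f := A.mulVecLin
  set g := M.mulVecLin
  have hnull : A.rank + Module.finrank F (LinearMap.ker f) = n := by
    have := LinearMap.finrank_range_add_finrank_ker f
    simpa [Matrix.rank, Module.finrank_fintype_fun_eq_card] using this
  have hker : Module.finrank F (LinearMap.ker f) = n - A.rank := by omega
  rw [← hker]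
  set h := f.domRestrict (LinearMap.range g)
  have hrn := LinearMap.finrank_range_add_finrank_ker h
  have hrange : LinearMap.range h = LinearMap.range ((A * M).mulVecLin) := by
    rw [LinearMap.range_domRestrict, Matrix.mulVecLin_mul]
    exact (LinearMap.range_comp _ _).symm
  have hkerle : Module.finrank F (LinearMap.ker h) ≤ Module.finrank F (LinearMap.ker f) := by
    let φ : (LinearMap.ker h) →ₗ[F] (LinearMap.ker f) :=
      LinearMap.codRestrict (LinearMap.ker f)
        ((LinearMap.range g).subtype ∘ₗ (LinearMap.ker h).subtype)
        (fun x => x.2)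
    have hinj : Function.Injective φ := by
      intro x y hxy
      have h1 := Subtype.ext_iff.mp hxy
      simp only [φ, LinearMap.codRestrict_apply, LinearMap.coe_comp, Function.comp_apply,
        Submodule.coe_subtype] at h1
      exact Subtype.ext (Subtype.ext h1)
    exact LinearMap.finrank_le_finrank_of_injective hinj
  have hMg : M.rank = Module.finrank F (LinearMap.range g) := rfl
  rw [hMg, ← hrn, hrange]
  exact Nat.add_le_add_left hkerle _

end MatrixAux

section ToMatAux

variable {F L : Type*} [Field F] [Field L] [Algebra F L] {n m μ : ℕ}
  (b : Module.Basis (Fin m) F L)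

lemma aux_toMat_rank (x : Fin n → L) : (toMat b x).rank = rankWeight F x := by
  rw [Matrix.rank_eq_finrank_span_row, rankWeight]
  have hrow : Set.range (toMat b x).row = ⇑b.equivFun '' Set.range x := by
    rw [← Set.range_comp]; rfl
  rw [hrow, Submodule.span_image_linearEquiv]
  exact LinearEquiv.finrank_map_eq b.equivFun _

lemma aux_toMat_sub (x y : Fin n → L) : toMat b (x - y) = toMat b x - toMat b y := by
  ext i j; simp [toMat]

lemma aux_toMat_mulVec (B : Matrix (Fin μ) (Fin n) F) (x : Fin n → L) :
    toMat b ((B.map (algebraMap F L)) *ᵥ x) = B * toMat b x := by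
  ext i j
  simp only [toMat, Matrix.mulVec, Matrix.mul_apply, Matrix.map_apply, dotProduct]
  rw [show (fun j₀ => algebraMap F L (B i j₀) * x j₀) = fun j₀ => B i j₀ • x j₀ by
    ext j₀; rw [Algebra.smul_def]]
  rw [map_sum b.repr]
  simp [Finsupp.finset_sum_apply, _root_.map_smul]

lemma aux_toMat_zero : toMat b (0 : Fin n → L) = 0 := by
  ext i j; simp [toMat]

end ToMatAux

section CodeAux

variable {L : Type*} [Field L] {p n k μ : ℕ}

lemma aux_transpose_mulVec_injective (G : Matrix (Fin p) (Fin n) L) (hG : G.rank = p) :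
    Function.Injective (fun u : Fin p → L => Gᵀ *ᵥ u) := by
  have hrk : Gᵀ.rank = p := by rw [Matrix.rank_transpose, hG]
  have h := LinearMap.finrank_range_add_finrank_ker (Gᵀ.mulVecLin)
  rw [show Module.finrank L (LinearMap.range Gᵀ.mulVecLin) = Gᵀ.rank from rfl, hrk,
    Module.finrank_fintype_fun_eq_card, Fintype.card_fin] at h
  have hker : LinearMap.ker Gᵀ.mulVecLin = ⊥ :=
    Submodule.finrank_eq_zero.mp (by omega)
  have := LinearMap.ker_eq_bot.mp hker
  exact this

lemma aux_mulVec_append (G : Matrix (Fin (k + μ)) (Fin n) L) (s : Fin k → L) (v : Fin μ → L) :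
    Gᵀ *ᵥ Fin.append s v =
      (G.submatrix (Fin.castAdd μ) id)ᵀ *ᵥ s + (lastRowsOfG G)ᵀ *ᵥ v := by
  ext j
  simp only [Matrix.mulVec, dotProduct, Pi.add_apply, Matrix.transpose_apply,
    Matrix.submatrix_apply, id_eq]
  rw [Fin.sum_univ_add]
  congr 1
  · apply Finset.sum_congr rfl; intro i _; rw [Fin.append_left]
  · apply Finset.sum_congr rfl; intro i _
    rw [Fin.append_right]
    rfl

end CodeAux

section SpanAux

variable {F : Type*} [Field F] {n μ : ℕ}

open Submodule Module

lemma aux_exists_superspace {V : Type*} [AddCommGroup V] [Module F V] [FiniteDimensional F V]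
    (W : Submodule F V) (d : ℕ) (h1 : finrank F W ≤ d)
    (h2 : d ≤ finrank F V) : ∃ W' : Submodule F V, W ≤ W' ∧ finrank F W' = d := by
  obtain ⟨c, hc⟩ := Nat.exists_eq_add_of_le h1
  clear h1
  induction c generalizing W with
  | zero => exact ⟨W, le_rfl, by omega⟩
  | succ c ih =>
    have hlt : finrank F W < finrank F V := by omega
    obtain ⟨x, hx⟩ := W.exists_of_finrank_lt hlt
    have hxW : x ∉ W := by simpa using hx 1 one_ne_zero
    have hx0 : x ≠ 0 := by rintro rfl; exact hxW W.zero_mem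
    have hinf : W ⊓ (F ∙ x) = ⊥ := by
      rw [eq_bot_iff]
      rintro y ⟨hyW, hyx⟩
      obtain ⟨r, rfl⟩ := Submodule.mem_span_singleton.mp hyx
      rcases eq_or_ne r 0 with rfl | hr
      · simp
      · exact absurd hyW (hx r hr)
    have hsum : finrank F ↥(W ⊔ (F ∙ x)) = finrank F W + 1 := by
      have := Submodule.finrank_sup_add_finrank_inf_eq W (F ∙ x)
      rw [hinf, finrank_bot, finrank_span_singleton hx0] at this
      omega
    obtain ⟨W', hle, hfr⟩ := ih (W ⊔ (F ∙ x)) (by omega)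
    exact ⟨W', le_trans le_sup_left hle, hfr⟩

lemma aux_exists_fullrank_factor (hμn : μ ≤ n) (B : Matrix (Fin μ) (Fin n) F) :
    ∃ (Bt : Matrix (Fin μ) (Fin n) F) (T : Matrix (Fin μ) (Fin μ) F),
      Bt.rank = μ ∧ B = T * Bt := by
  classical
  set W : Submodule F (Fin n → F) := Submodule.span F (Set.range B) with hW
  have hWr : finrank F W = B.rank := (Matrix.rank_eq_finrank_span_row B).symm
  have h1 : finrank F W ≤ μ := by
    rw [hWr]; exact B.rank_le_height
  have h2 : μ ≤ finrank F (Fin n → F) := by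
    rw [Module.finrank_fintype_fun_eq_card, Fintype.card_fin]; exact hμn
  obtain ⟨W', hle, hfr⟩ := aux_exists_superspace W μ h1 h2
  let bas : Basis (Fin μ) F W' := Module.finBasisOfFinrankEq F W' hfr
  let Bt : Matrix (Fin μ) (Fin n) F := Matrix.of fun i => (bas i : Fin n → F)
  have hindep : LinearIndependent F Bt := by
    have := bas.linearIndependent
    exact this.map' W'.subtype (Submodule.ker_subtype W')
  have hrank : Bt.rank = μ := by
    rw [hindep.rank_matrix, Fintype.card_fin]
  have hspan : Submodule.span F (Set.range Bt) = W' := by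
    have : Set.range Bt = (W'.subtype) '' (Set.range bas) := by
      rw [← Set.range_comp]; rfl
    rw [this, ← Submodule.map_span, bas.span_eq, Submodule.map_top, Submodule.range_subtype]
  have hrow : ∀ i, B i ∈ Submodule.span F (Set.range Bt) := by
    intro i
    rw [hspan]
    exact hle (Submodule.subset_span ⟨i, rfl⟩)
  choose T hT using fun i => (mem_span_range_iff_exists_fun F).mp (hrow i)
  refine ⟨Bt, Matrix.of T, hrank, ?_⟩
  ext i j
  rw [Matrix.mul_apply]
  have := congrFun (hT i) j
  simpa [Finset.sum_apply] using this.symm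

end SpanAux

section ProbAux

variable {Ω α β : Type*} [Fintype Ω] [MeasurableSpace Ω] [MeasurableSingletonClass Ω]
  [Fintype α] [Fintype β]

lemma aux_meas_fiber_sum (P : Measure Ω) (W : Ω → β) (E : Set Ω) :
    P E = ∑ w : β, P (E ∩ {ω | W ω = w}) := by
  classical
  have hE : E = ⋃ w ∈ (Finset.univ : Finset β), E ∩ {ω | W ω = w} := by
    ext ω; simp
  nth_rewrite 1 [hE]
  rw [measure_biUnion_finset]
  · intro w _ w' _ hww'
    simp only [Function.onFun, Set.disjoint_left]
    rintro ω ⟨-, h1⟩ ⟨-, h2⟩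
    exact hww' (h1 ▸ h2 ▸ rfl)
  · intro w _; exact (Set.toFinite _).measurableSet

lemma aux_mutualInfo_eq_zero_of_indep (P : Measure Ω) [IsProbabilityMeasure P]
    (X : Ω → α) (W : Ω → β)
    (h : ∀ a w, P {ω | X ω = a ∧ W ω = w} = P {ω | X ω = a} * P {ω | W ω = w}) :
    mutualInfo P X W = 0 := by
  classical
  set p : α → ℝ := fun a => (P {ω | X ω = a}).toReal with hp
  set q : β → ℝ := fun w => (P {ω | W ω = w}).toReal with hq
  have hsump : ∑ a, p a = 1 := by
    have := aux_meas_fiber_sum P X (Set.univ : Set Ω)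
    simp only [Set.univ_inter, measure_univ] at this
    have := congrArg ENNReal.toReal this
    rw [ENNReal.toReal_sum (fun a _ => measure_ne_top P _)] at this
    simpa [hp] using this.symm
  have hsumq : ∑ w, q w = 1 := by
    have := aux_meas_fiber_sum P W (Set.univ : Set Ω)
    simp only [Set.univ_inter, measure_univ] at this
    have := congrArg ENNReal.toReal this
    rw [ENNReal.toReal_sum (fun a _ => measure_ne_top P _)] at this
    simpa [hq] using this.symm
  have hpair : entropy P (fun ω => (X ω, W ω)) = entropy P X + entropy P W := by
    unfold entropy
    rw [Fintype.sum_prod_type]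
    have hterm : ∀ a w, (P {ω | (X ω, W ω) = (a, w)}).toReal = p a * q w := by
      intro a w
      have hset : {ω | (X ω, W ω) = (a, w)} = {ω | X ω = a ∧ W ω = w} := by
        ext ω; simp [Prod.ext_iff]
      rw [hset, h a w, ENNReal.toReal_mul]
    have : ∀ a w, (P {ω | (X ω, W ω) = (a, w)}).toReal *
        Real.log (P {ω | (X ω, W ω) = (a, w)}).toReal =
        p a * q w * Real.log (p a) + p a * q w * Real.log (q w) := by
      intro a w
      rw [hterm a w]
      rcases eq_or_ne (p a) 0 with h0 | h0
      · simp [h0]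
      rcases eq_or_ne (q w) 0 with h1 | h1
      · simp [h1]
      rw [Real.log_mul h0 h1]; ring
    simp only [this, Finset.sum_add_distrib]
    have e1 : ∑ a, ∑ w, p a * q w * Real.log (p a) = ∑ a, p a * Real.log (p a) := by
      refine Finset.sum_congr rfl fun a _ => ?_
      calc ∑ w, p a * q w * Real.log (p a) = (p a * Real.log (p a)) * ∑ w, q w := by
            rw [Finset.mul_sum]; exact Finset.sum_congr rfl fun w _ => by ring
        _ = p a * Real.log (p a) := by rw [hsumq, mul_one]
    have e2 : ∑ a, ∑ w, p a * q w * Real.log (q w) = ∑ w, q w * Real.log (q w) := by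
      rw [Finset.sum_comm]
      refine Finset.sum_congr rfl fun w _ => ?_
      calc ∑ a, p a * q w * Real.log (q w) = (q w * Real.log (q w)) * ∑ a, p a := by
            rw [Finset.mul_sum]; exact Finset.sum_congr rfl fun a _ => by ring
        _ = q w * Real.log (q w) := by rw [hsump, mul_one]
    rw [e1, e2]
    ring
  rw [mutualInfo, hpair]; ring

end ProbAux

/-- The universal scheme combining security and error control: if `G` generates an MRD code
of dimension `k + μ`, its last `μ` rows generate an MRD code, `V` is uniform and independent
of the message `S`, `U = (S;V)` and `X = Gᵀ U`, then (a) the fan-out sets of distinct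
codewords are disjoint (the scheme is universally `t`-error-`ρ`-erasure-correcting), and
(b) `I(S;BX) = 0` for every `B ∈ F^{μ×n}` (universal security under `μ` observations). -/
theorem universal_secure_error_correcting_scheme
    (q m : ℕ) (hq : IsPrimePow q)
    (F L : Type) [Field F] [Fintype F] (hF : Fintype.card F = q)
    [Field L] [Fintype L] [Algebra F L] (hm : Module.finrank F L = m)
    (n k μ t ρ : ℕ) (hmn : n ≤ m) (hk : 1 ≤ k) (hsum : k + 2 * t + ρ + μ ≤ n)
    (b : Module.Basis (Fin m) F L)
    (G : Matrix (Fin (k + μ)) (Fin n) L) (hG : G.rank = k + μ)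
    (hMRD : minRankDistEq F
      {x : Fin n → L | ∃ u : Fin (k + μ) → L, x = Gᵀ *ᵥ u} (n - (k + μ) + 1))
    (hMRD2 : minRankDistEq F
      {x : Fin n → L | ∃ v : Fin μ → L, x = (lastRowsOfG G)ᵀ *ᵥ v} (n - μ + 1))
    (Ω : Type) [Fintype Ω] [MeasurableSpace Ω] [MeasurableSingletonClass Ω]
    (P : Measure Ω) [IsProbabilityMeasure P]
    (S : Ω → Fin k → L) (V : Ω → Fin μ → L)
    (hVunif : ∀ v₁ v₂ : Fin μ → L, P {ω | V ω = v₁} = P {ω | V ω = v₂})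
    (hindep : ∀ (s : Fin k → L) (v : Fin μ → L),
      P {ω | S ω = s ∧ V ω = v} = P {ω | S ω = s} * P {ω | V ω = v})
    (X : Ω → Fin n → L)
    (hX : ∀ ω, X ω = Gᵀ *ᵥ Fin.append (S ω) (V ω)) :
    (∀ u₁ u₂ : Fin (k + μ) → L, u₁ ≠ u₂ →
      fanOut ρ t (toMat b (Gᵀ *ᵥ u₁)) ∩ fanOut ρ t (toMat b (Gᵀ *ᵥ u₂)) = ∅) ∧
    (∀ B : Matrix (Fin μ) (Fin n) F,
      mutualInfo P S (fun ω => (B.map (algebraMap F L)) *ᵥ X ω) = 0) := by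
  classical
  have hGinj := aux_transpose_mulVec_injective G hG
  constructor
  · -- Part (a)
    intro u₁ u₂ hne
    rw [Set.eq_empty_iff_forall_notMem]
    rintro ⟨A, y⟩ ⟨⟨hA1, Z₁, hZ₁, hy₁⟩, hA2, Z₂, hZ₂, hy₂⟩
    simp only [fanOut] at hA1 hA2 hy₁ hy₂
    set x₁ : Fin n → L := Gᵀ *ᵥ u₁ with hx₁
    set x₂ : Fin n → L := Gᵀ *ᵥ u₂ with hx₂
    have hx : x₁ ≠ x₂ := fun h => hne (hGinj h)
    have hwlb : n - (k + μ) + 1 ≤ rankWeight F (x₁ - x₂) :=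
      hMRD.2 ⟨x₁, ⟨u₁, rfl⟩, x₂, ⟨u₂, rfl⟩, hx, rfl⟩
    have heq : A * (toMat b x₁ - toMat b x₂) = Z₂ - Z₁ := by
      have h12 : A * toMat b x₁ + Z₁ = A * toMat b x₂ + Z₂ := hy₁.symm.trans hy₂
      rw [Matrix.mul_sub, sub_eq_sub_iff_add_eq_add]
      rw [h12]
      abel
    have h1 := aux_rank_le_rank_mul_add A (toMat b x₁ - toMat b x₂)
    rw [heq] at h1
    have h2 : (Z₂ - Z₁).rank ≤ t + t := by
      have hadd := aux_rank_add_le Z₂ (-Z₁)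
      rw [aux_rank_neg] at hadd
      rw [sub_eq_add_neg]
      exact le_trans hadd (Nat.add_le_add hZ₂ hZ₁)
    have h3 : (toMat b x₁ - toMat b x₂).rank = rankWeight F (x₁ - x₂) := by
      rw [← aux_toMat_sub, aux_toMat_rank]
    have h4 : A.rank ≤ n := A.rank_le_width
    omega
  · -- Part (b)
    intro B
    have hμn : μ ≤ n := by omega
    obtain ⟨Bt, T, hBtrank, hBT⟩ := aux_exists_fullrank_factor hμn B
    set algL := algebraMap F L with halgL
    set BL := B.map algL with hBLdef
    set BtL := Bt.map algL with hBtLdef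
    set TL := T.map algL with hTLdef
    have hBL : BL = TL * BtL := by
      rw [hBLdef, hBT, hTLdef, hBtLdef, Matrix.map_mul]
    set G₁ : Matrix (Fin k) (Fin n) L := G.submatrix (Fin.castAdd μ) id with hG₁
    set G₂ : Matrix (Fin μ) (Fin n) L := lastRowsOfG G with hG₂
    set M : Matrix (Fin μ) (Fin μ) L := BtL * G₂ᵀ with hM
    set c : (Fin k → L) → (Fin μ → L) := fun s => BtL *ᵥ (G₁ᵀ *ᵥ s) with hc
    have hYdecomp : ∀ ω, BtL *ᵥ X ω = c (S ω) + M *ᵥ (V ω) := by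
      intro ω
      rw [hX ω, aux_mulVec_append, Matrix.mulVec_add]
      simp only [hc, hM, hG₁, hG₂, Matrix.mulVec_mulVec]
    -- injectivity of v ↦ M *ᵥ v
    have hG₂inj : ∀ v : Fin μ → L, G₂ᵀ *ᵥ v = 0 → v = 0 := by
      intro v hv
      have h0 : Gᵀ *ᵥ Fin.append (0 : Fin k → L) v = Gᵀ *ᵥ (0 : Fin (k + μ) → L) := by
        rw [aux_mulVec_append, hv, Matrix.mulVec_zero, Matrix.mulVec_zero, add_zero]
      have happ : Fin.append (0 : Fin k → L) v = 0 := hGinj h0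
      funext i
      have := congrFun happ (Fin.natAdd k i)
      rwa [Fin.append_right] at this
    have hMker : ∀ v : Fin μ → L, M *ᵥ v = 0 → v = 0 := by
      intro v hv
      by_contra hv0
      set x : Fin n → L := G₂ᵀ *ᵥ v with hxdef
      have hx0 : x ≠ 0 := fun h => hv0 (hG₂inj v h)
      have hlow : n - μ + 1 ≤ rankWeight F x := by
        have mem : rankWeight F (x - 0) ∈
            {e | ∃ y₁ ∈ {x : Fin n → L | ∃ w : Fin μ → L, x = G₂ᵀ *ᵥ w},
              ∃ y₂ ∈ {x : Fin n → L | ∃ w : Fin μ → L, x = G₂ᵀ *ᵥ w},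
              y₁ ≠ y₂ ∧ rankWeight F (y₁ - y₂) = e} :=
          ⟨x, ⟨v, rfl⟩, 0, ⟨0, by rw [Matrix.mulVec_zero]⟩, hx0, rfl⟩
        have := hMRD2.2 mem
        rwa [sub_zero] at this
      have hup : μ + rankWeight F x ≤ n := by
        have hBtLx : BtL *ᵥ x = 0 := by
          rw [hxdef, Matrix.mulVec_mulVec, ← hM, hv]
        have hmul0 : Bt * toMat b x = 0 := by
          rw [← aux_toMat_mulVec, ← hBtLdef, hBtLx, aux_toMat_zero]
        have := Matrix.rank_add_rank_le_card_of_mul_eq_zero hmul0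
        rwa [hBtrank, aux_toMat_rank, Fintype.card_fin] at this
      omega
    have hMinj : Function.Injective (fun v : Fin μ → L => M *ᵥ v) := by
      intro v₁ v₂ h12
      have : M *ᵥ (v₁ - v₂) = 0 := by
        rw [Matrix.mulVec_sub]
        simpa [sub_eq_zero] using h12
      have := hMker _ this
      rwa [sub_eq_zero] at this
    have hMbij : Function.Bijective (fun v : Fin μ → L => M *ᵥ v) :=
      Finite.injective_iff_bijective.mp hMinj
    set e : (Fin μ → L) ≃ (Fin μ → L) := Equiv.ofBijective _ hMbij with he
    set p : ENNReal := P {ω | V ω = fun _ => 0} with hpdef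
    have hjointY : ∀ (s : Fin k → L) (w : Fin μ → L),
        P {ω | S ω = s ∧ BtL *ᵥ X ω = w} = P {ω | S ω = s} * p := by
      intro s w
      set v₀ : Fin μ → L := e.symm (w - c s) with hv₀
      have hset : {ω | S ω = s ∧ BtL *ᵥ X ω = w} = {ω | S ω = s ∧ V ω = v₀} := by
        ext ω
        simp only [Set.mem_setOf_eq]
        constructor
        · rintro ⟨hs, hw⟩
          refine ⟨hs, ?_⟩
          have hMv : e (V ω) = w - c s := by
            show M *ᵥ V ω = w - c s
            rw [hYdecomp ω, hs] at hw
            exact eq_sub_of_add_eq' hw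
          have := congrArg e.symm hMv
          rwa [Equiv.symm_apply_apply] at this
        · rintro ⟨hs, hv⟩
          refine ⟨hs, ?_⟩
          rw [hYdecomp ω, hs, hv]
          have hMv : M *ᵥ v₀ = w - c s := e.apply_symm_apply (w - c s)
          rw [hMv]
          abel
      rw [hset, hindep s v₀, hVunif v₀ (fun _ => 0)]
    -- now the general B
    set N : (Fin μ → L) → ℕ :=
      fun w' => (Finset.univ.filter (fun w : Fin μ → L => TL *ᵥ w = w')).card with hN
    have hjointB : ∀ (s : Fin k → L) (w' : Fin μ → L),
        P {ω | S ω = s ∧ BL *ᵥ X ω = w'} = P {ω | S ω = s} * ((N w' : ENNReal) * p) := by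
      intro s w'
      have hBtoY : ∀ ω, BL *ᵥ X ω = TL *ᵥ (BtL *ᵥ X ω) := by
        intro ω
        rw [hBL, ← Matrix.mulVec_mulVec]
      rw [aux_meas_fiber_sum P (fun ω => BtL *ᵥ X ω) {ω | S ω = s ∧ BL *ᵥ X ω = w'}]
      have hterm : ∀ w : Fin μ → L,
          {ω | S ω = s ∧ BL *ᵥ X ω = w'} ∩ {ω | BtL *ᵥ X ω = w} =
          if TL *ᵥ w = w' then {ω | S ω = s ∧ BtL *ᵥ X ω = w} else ∅ := by
        intro w
        by_cases hcond : TL *ᵥ w = w'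
        · rw [if_pos hcond]
          ext ω
          simp only [Set.mem_inter_iff, Set.mem_setOf_eq]
          constructor
          · rintro ⟨⟨hs, -⟩, hw⟩; exact ⟨hs, hw⟩
          · rintro ⟨hs, hw⟩
            exact ⟨⟨hs, by rw [hBtoY ω, hw, hcond]⟩, hw⟩
        · rw [if_neg hcond]
          ext ω
          simp only [Set.mem_inter_iff, Set.mem_setOf_eq, Set.mem_empty_iff_false, iff_false,
            not_and]
          rintro ⟨-, hw'⟩ hw
          exact hcond (by rw [← hw, ← hBtoY ω, hw'])
      calc ∑ w : Fin μ → L, P ({ω | S ω = s ∧ BL *ᵥ X ω = w'} ∩ {ω | BtL *ᵥ X ω = w})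
          = ∑ w : Fin μ → L, if TL *ᵥ w = w' then P {ω | S ω = s} * p else 0 := by
            refine Finset.sum_congr rfl fun w _ => ?_
            rw [hterm w]
            by_cases hcond : TL *ᵥ w = w'
            · rw [if_pos hcond, if_pos hcond, hjointY s w]
            · rw [if_neg hcond, if_neg hcond, measure_empty]
        _ = ∑ w ∈ Finset.univ.filter (fun w : Fin μ → L => TL *ᵥ w = w'),
              P {ω | S ω = s} * p := (Finset.sum_filter _ _).symm
        _ = (N w' : ENNReal) * (P {ω | S ω = s} * p) := by
            rw [Finset.sum_const, hN, nsmul_eq_mul]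
        _ = P {ω | S ω = s} * ((N w' : ENNReal) * p) := by ring
    have hmargS : ∑ s : Fin k → L, P {ω | S ω = s} = 1 := by
      have := aux_meas_fiber_sum P S (Set.univ : Set Ω)
      simp only [Set.univ_inter, measure_univ] at this
      exact this.symm
    have hmargB : ∀ w' : Fin μ → L,
        P {ω | BL *ᵥ X ω = w'} = (N w' : ENNReal) * p := by
      intro w'
      rw [aux_meas_fiber_sum P S {ω | BL *ᵥ X ω = w'}]
      have : ∀ s : Fin k → L, {ω | BL *ᵥ X ω = w'} ∩ {ω | S ω = s} =
          {ω | S ω = s ∧ BL *ᵥ X ω = w'} := by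
        intro s; ext ω; simp only [Set.mem_inter_iff, Set.mem_setOf_eq]; tauto
      calc ∑ s : Fin k → L, P ({ω | BL *ᵥ X ω = w'} ∩ {ω | S ω = s})
          = ∑ s : Fin k → L, P {ω | S ω = s} * ((N w' : ENNReal) * p) := by
            refine Finset.sum_congr rfl fun s _ => ?_
            rw [this s, hjointB s w']
        _ = (∑ s : Fin k → L, P {ω | S ω = s}) * ((N w' : ENNReal) * p) := by
            rw [Finset.sum_mul]
        _ = (N w' : ENNReal) * p := by rw [hmargS, one_mul]
    apply aux_mutualInfo_eq_zero_of_indep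
    intro s w'
    rw [show {ω | S ω = s ∧ (B.map (algebraMap F L)) *ᵥ X ω = w'} =
      {ω | S ω = s ∧ BL *ᵥ X ω = w'} from rfl, hjointB s w', hmargB w']
end

section
/- Let q be a prime power, n and m positive integers, and t, ρ, μ nonnegative integers with μ ≤ n − 2t − ρ. Let S be a random variable with values in a finite set 𝒮 and let X be a jointly distributed random variable with values in Fq^{n×m}. For each s with P(S = s) > 0, let X_s = {x ∈ Fq^{n×m} : P(S = s, X = x) > 0} and Y^{ρ,t}_{(s)} = ⋃_{x ∈ X_s} Y^{ρ,t}_x. Assume: (i) the sets Y^{ρ,t}_{(s)}, over s in the support of S, are pairwise disjoint (the encoder is universally t-error-ρ-erasure-correcting); and (ii) I(S; BX) = 0 for every matrix B ∈ Fq^{μ×n} (universal security under μ observations). Then H(S) ≤ (n − 2t − ρ − μ)·m·log q. -/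
set_option autoImplicit false

open Matrix MeasureTheory

lemma card_filter_interval (n a b : ℕ) (hb : b ≤ n) :
    (Finset.univ.filter (fun i : Fin n => a ≤ (i:ℕ) ∧ (i:ℕ) < b)).card = b - a := by
  have h : ∀ m_ ∈ Finset.Ico a b, m_ < n := fun m_ hm =>
    lt_of_lt_of_le (Finset.mem_Ico.1 hm).2 hb
  have he : (Finset.univ.filter (fun i : Fin n => a ≤ (i:ℕ) ∧ (i:ℕ) < b))
      = (Finset.Ico a b).attachFin h := by
    ext i
    simp [Finset.mem_attachFin, Finset.mem_Ico]
  rw [he, Finset.card_attachFin, Nat.card_Ico]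

lemma card_filter_not_interval (n a b : ℕ) (hb : b ≤ n) :
    (Finset.univ.filter (fun i : Fin n => ¬(a ≤ (i:ℕ) ∧ (i:ℕ) < b))).card = n - (b - a) := by
  rw [Finset.filter_not, Finset.card_sdiff_of_subset (Finset.filter_subset _ _),
    card_filter_interval n a b hb, Finset.card_univ, Fintype.card_fin]

lemma rank_le_card_support {F : Type*} [Field F] {n m : ℕ}
    (M : Matrix (Fin n) (Fin m) F) (T : Finset (Fin n))
    (h : ∀ i ∉ T, ∀ j, M i j = 0) :
    M.rank ≤ T.card := by
  classical
  have hM : M = Matrix.diagonal (fun i => if i ∈ T then (1:F) else 0) * M := by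
    ext i j
    rw [Matrix.diagonal_mul]
    by_cases hi : i ∈ T
    · simp [hi]
    · simp [hi, h i hi j]
  calc M.rank = (Matrix.diagonal (fun i => if i ∈ T then (1:F) else 0) * M).rank := by
        rw [← hM]
    _ ≤ (Matrix.diagonal (fun i => if i ∈ T then (1:F) else 0)).rank :=
        Matrix.rank_mul_le_left _ _
    _ = Fintype.card {i // (if i ∈ T then (1:F) else 0) ≠ 0} := Matrix.rank_diagonal _
    _ = T.card := by
        rw [Fintype.card_subtype]
        congr 1
        ext i
        by_cases hi : i ∈ T <;> simp [hi]

lemma cond_entropy_le {𝒮 W : Type*} [Fintype 𝒮] [Fintype W]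
    (p : 𝒮 × W → ℝ) (hp : ∀ x, 0 ≤ p x) (hsum : ∑ x, p x = 1)
    (K : ℕ) (hK : 0 < K)
    (hcard : ∀ w : W, (Finset.univ.filter (fun s : 𝒮 => 0 < p (s, w))).card ≤ K) :
    (- ∑ x, p x * Real.log (p x))
      - (- ∑ w : W, (∑ s : 𝒮, p (s, w)) * Real.log (∑ s : 𝒮, p (s, w)))
      ≤ Real.log K := by
  classical
  set Q : W → ℝ := fun w => ∑ s : 𝒮, p (s, w) with hQ
  have hQ0 : ∀ w, 0 ≤ Q w := fun w => Finset.sum_nonneg fun s _ => hp (s, w)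
  have hpQ : ∀ x : 𝒮 × W, p x ≤ Q x.2 := by
    intro x
    exact Finset.single_le_sum (fun s _ => hp (s, x.2)) (Finset.mem_univ x.1)
  have hrw : ∑ w : W, Q w * Real.log (Q w) = ∑ x : 𝒮 × W, p x * Real.log (Q x.2) := by
    rw [Fintype.sum_prod_type_right]
    congr 1
    ext w
    rw [hQ, Finset.sum_mul]
  have hmain : ∀ x : 𝒮 × W, p x * (Real.log (Q x.2) - Real.log (p x)) ≤
      (if 0 < p x then Q x.2 / K else 0) - p x + p x * Real.log K := by
    intro x
    by_cases hx : 0 < p x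
    · have hq : 0 < Q x.2 := lt_of_lt_of_le hx (hpQ x)
      have hKR : (0:ℝ) < K := by exact_mod_cast hK
      have h1 : Real.log (Q x.2 / (p x * K)) ≤ Q x.2 / (p x * K) - 1 :=
        Real.log_le_sub_one_of_pos (by positivity)
      have h2 : Real.log (Q x.2 / (p x * K)) =
          Real.log (Q x.2) - Real.log (p x) - Real.log K := by
        rw [Real.log_div (ne_of_gt hq) (by positivity), Real.log_mul (ne_of_gt hx) (ne_of_gt hKR)]
        ring
      rw [h2] at h1
      have h3 := mul_le_mul_of_nonneg_left h1 (le_of_lt hx)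
      have h4 : p x * (Q x.2 / (p x * K) - 1) = Q x.2 / K - p x := by
        field_simp
      rw [h4] at h3
      rw [if_pos hx]
      nlinarith
    · have hx0 : p x = 0 := le_antisymm (not_lt.1 hx) (hp x)
      simp [hx0]
  have hsum1 : ∑ x : 𝒮 × W, (if 0 < p x then Q x.2 / K else 0) ≤ 1 := by
    rw [Fintype.sum_prod_type_right]
    have : ∀ w : W, (∑ s : 𝒮, if 0 < p (s, w) then Q w / K else 0) ≤ Q w := by
      intro w
      rw [← Finset.sum_filter, Finset.sum_const, nsmul_eq_mul]
      calc ((Finset.univ.filter (fun s : 𝒮 => 0 < p (s, w))).card : ℝ) * (Q w / K)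
          ≤ (K : ℝ) * (Q w / K) := by
            apply mul_le_mul_of_nonneg_right _ (div_nonneg (hQ0 w) (Nat.cast_nonneg K))
            exact_mod_cast hcard w
        _ = Q w := by
            field_simp
    calc ∑ w : W, (∑ s : 𝒮, if 0 < p (s, w) then Q w / K else 0) ≤ ∑ w : W, Q w :=
          Finset.sum_le_sum fun w _ => this w
      _ = 1 := by rw [hQ]; rw [← Fintype.sum_prod_type_right]; exact hsum
  have lhs_eq : (- ∑ x : 𝒮 × W, p x * Real.log (p x))
      - (- ∑ w : W, Q w * Real.log (Q w))
      = ∑ x : 𝒮 × W, p x * (Real.log (Q x.2) - Real.log (p x)) := by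
    rw [hrw]
    have h5 : ∑ x : 𝒮 × W, p x * (Real.log (Q x.2) - Real.log (p x))
        = ∑ x : 𝒮 × W, (p x * Real.log (Q x.2) - p x * Real.log (p x)) :=
      Finset.sum_congr rfl fun x _ => by ring
    rw [h5, Finset.sum_sub_distrib]
    ring
  rw [lhs_eq]
  calc ∑ x : 𝒮 × W, p x * (Real.log (Q x.2) - Real.log (p x))
      ≤ ∑ x : 𝒮 × W, ((if 0 < p x then Q x.2 / K else 0) - p x + p x * Real.log K) :=
        Finset.sum_le_sum fun x _ => hmain x
    _ = (∑ x : 𝒮 × W, (if 0 < p x then Q x.2 / K else 0)) - (∑ x : 𝒮 × W, p x)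
          + (∑ x : 𝒮 × W, p x) * Real.log K := by
        rw [Finset.sum_add_distrib, Finset.sum_sub_distrib, ← Finset.sum_mul]
    _ ≤ 1 - 1 + 1 * Real.log K := by
        rw [hsum]
        simp only [add_le_add_iff_right]
        linarith [hsum1]
    _ = Real.log K := by ring

/-- Rate converse: if the scheme is universally `t`-error-`ρ`-erasure-correcting (pairwise
disjoint fan-out sets `Y^{ρ,t}_{(s)}`) and universally secure under `μ` observations, then
the message entropy satisfies `H(S) ≤ (n - 2t - ρ - μ)·m·log q`. -/
theorem rate_converse_secure_error_correcting
    (q : ℕ) (hq : IsPrimePow q) (n m : ℕ) (hn : 0 < n) (hm : 0 < m)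
    (t ρ μ : ℕ) (hpar : μ + 2 * t + ρ ≤ n)
    (F : Type) [Field F] [Fintype F] (hF : Fintype.card F = q)
    (𝒮 : Type) [Fintype 𝒮]
    (Ω : Type) [Fintype Ω] [MeasurableSpace Ω] [MeasurableSingletonClass Ω]
    (P : Measure Ω) [IsProbabilityMeasure P]
    (S : Ω → 𝒮) (X : Ω → Matrix (Fin n) (Fin m) F)
    (hdisj : ∀ s₁ s₂ : 𝒮, s₁ ≠ s₂ →
      (⋃ x ∈ {x | 0 < P {ω | S ω = s₁ ∧ X ω = x}}, fanOut ρ t x) ∩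
        (⋃ x ∈ {x | 0 < P {ω | S ω = s₂ ∧ X ω = x}}, fanOut ρ t x) = ∅)
    (hsec : ∀ B : Matrix (Fin μ) (Fin n) F,
      mutualInfo P S (fun ω => B * X ω) = 0) :
    entropy P S ≤ ((n : ℝ) - 2 * t - ρ - μ) * (m * Real.log q) := by
  classical
  set k := n - (μ + 2 * t + ρ) with hk
  have hkn : μ + 2 * t + ρ + k = n := by omega
  have hμn : μ ≤ n := by omega
  set B₀ : Matrix (Fin μ) (Fin n) F :=
    Matrix.of (fun i j => if (j : ℕ) = (i : ℕ) then 1 else 0) with hB₀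
  have hBmul : ∀ (x : Matrix (Fin n) (Fin m) F) (i : Fin μ) (j : Fin m),
      (B₀ * x) i j = x ⟨(i : ℕ), lt_of_lt_of_le i.2 hμn⟩ j := by
    intro x i j
    rw [Matrix.mul_apply]
    rw [Finset.sum_eq_single (⟨(i : ℕ), lt_of_lt_of_le i.2 hμn⟩ : Fin n)]
    · simp [hB₀]
    · intro b _ hb
      have hbi : ¬((b : ℕ) = (i : ℕ)) := fun hbi => hb (Fin.ext hbi)
      simp [hB₀, hbi]
    · intro h; exact absurd (Finset.mem_univ _) h
  set Y : Ω → Matrix (Fin μ) (Fin m) F := fun ω => B₀ * X ω with hYdef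
  set p : 𝒮 × Matrix (Fin μ) (Fin m) F → ℝ :=
    fun a => (P {ω | S ω = a.1 ∧ Y ω = a.2}).toReal with hpdef
  have hmeas : ∀ A : Set Ω, MeasurableSet A := fun A => (Set.toFinite A).measurableSet
  have hfin : ∀ A : Set Ω, P A ≠ ⊤ := fun A => measure_ne_top P A
  have hmarg : ∀ w, (P {ω | Y ω = w}).toReal = ∑ s : 𝒮, p (s, w) := by
    intro w
    have hU : {ω | Y ω = w} = ⋃ s : 𝒮, {ω | S ω = s ∧ Y ω = w} := by
      ext ω; simp
    have hdis : Pairwise (Function.onFun Disjoint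
        (fun s : 𝒮 => {ω | S ω = s ∧ Y ω = w})) := by
      intro s₁ s₂ hne
      rw [Function.onFun, Set.disjoint_left]
      rintro ω ⟨h1, -⟩ ⟨h2, -⟩
      exact hne (h1 ▸ h2 ▸ rfl)
    rw [hU, measure_iUnion hdis (fun s => hmeas _), tsum_fintype,
      ENNReal.toReal_sum (fun s _ => hfin _)]
  have hsum : ∑ a : 𝒮 × Matrix (Fin μ) (Fin m) F, p a = 1 := by
    have hU : (Set.univ : Set Ω)
        = ⋃ a : 𝒮 × Matrix (Fin μ) (Fin m) F, {ω | S ω = a.1 ∧ Y ω = a.2} := by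
      ext ω
      constructor
      · intro _
        exact Set.mem_iUnion.2 ⟨(S ω, Y ω), ⟨rfl, rfl⟩⟩
      · intro _; trivial
    have hdis : Pairwise (Function.onFun Disjoint
        (fun a : 𝒮 × Matrix (Fin μ) (Fin m) F => {ω | S ω = a.1 ∧ Y ω = a.2})) := by
      intro a b hne
      rw [Function.onFun, Set.disjoint_left]
      rintro ω ⟨h1, h2⟩ ⟨h3, h4⟩
      exact hne (Prod.ext (h1 ▸ h3 ▸ rfl) (h2 ▸ h4 ▸ rfl))
    have h1 : P (Set.univ : Set Ω) = 1 := measure_univ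
    rw [hU, measure_iUnion hdis (fun a => hmeas _), tsum_fintype] at h1
    have := congrArg ENNReal.toReal h1
    rw [ENNReal.toReal_sum (fun a _ => hfin _)] at this
    simpa using this
  have e1 : entropy P (fun ω => (S ω, Y ω))
      = - ∑ a : 𝒮 × Matrix (Fin μ) (Fin m) F, p a * Real.log (p a) := by
    unfold entropy
    congr 1
    apply Finset.sum_congr rfl
    intro a _
    have hset : {ω | (S ω, Y ω) = a} = {ω | S ω = a.1 ∧ Y ω = a.2} := by
      ext ω; simp [Prod.ext_iff]
    rw [hset]
  have e2 : entropy P Y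
      = - ∑ w, (∑ s : 𝒮, p (s, w)) * Real.log (∑ s : 𝒮, p (s, w)) := by
    unfold entropy
    congr 1
    apply Finset.sum_congr rfl
    intro w _
    rw [hmarg w]
  have hI := hsec B₀
  rw [← hYdef] at hI
  unfold mutualInfo at hI
  have hSentropy : entropy P S
      = (- ∑ a : 𝒮 × Matrix (Fin μ) (Fin m) F, p a * Real.log (p a))
        - (- ∑ w, (∑ s : 𝒮, p (s, w)) * Real.log (∑ s : 𝒮, p (s, w))) := by
    rw [← e1, ← e2]; linarith
  set K := q ^ (k * m) with hK
  have hqpos : 0 < q := hq.pos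
  have hKpos : 0 < K := pow_pos hqpos _
  have hcard : ∀ w, (Finset.univ.filter (fun s : 𝒮 => 0 < p (s, w))).card ≤ K := by
    intro w
    have hpick : ∀ s ∈ Finset.univ.filter (fun s : 𝒮 => 0 < p (s, w)),
        ∃ x : Matrix (Fin n) (Fin m) F,
          0 < P {ω | S ω = s ∧ X ω = x} ∧ B₀ * x = w := by
      intro s hs
      rw [Finset.mem_filter] at hs
      have hs2 : 0 < p (s, w) := hs.2
      rw [hpdef] at hs2
      have hpos : 0 < P {ω | S ω = s ∧ Y ω = w} := (ENNReal.toReal_pos_iff.mp hs2).1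
      have hex : ∃ ω₀ ∈ {ω | S ω = s ∧ Y ω = w}, 0 < P {ω₀} := by
        by_contra hcon
        push_neg at hcon
        have hU2 : {ω | S ω = s ∧ Y ω = w} = ⋃ ω₀ ∈ {ω | S ω = s ∧ Y ω = w}, {ω₀} := by
          ext ω'; simp
        have hnull : P {ω | S ω = s ∧ Y ω = w} = 0 := by
          rw [hU2]
          exact (measure_biUnion_null_iff (Set.to_countable _)).2
            (fun ω₀ h' => le_zero_iff.mp (hcon ω₀ h'))
        exact absurd hnull (ne_of_gt hpos)
      obtain ⟨ω₀, hω₀, hω₀pos⟩ := hex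
      refine ⟨X ω₀, ?_, ?_⟩
      · refine lt_of_lt_of_le hω₀pos (measure_mono ?_)
        intro ω hω
        rw [Set.mem_singleton_iff] at hω
        subst hω
        exact ⟨hω₀.1, rfl⟩
      · have := hω₀.2
        rw [hYdef] at this
        exact this
    choose! xf hxf1 hxf2 using hpick
    have hle : (Finset.univ.filter (fun s : 𝒮 => 0 < p (s, w))).card
        ≤ Fintype.card (Matrix (Fin k) (Fin m) F) := by
      rw [← Finset.card_univ]
      refine Finset.card_le_card_of_injOn
        (fun s => Matrix.of (fun (i : Fin k) (j : Fin m) =>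
          xf s ⟨μ + (i : ℕ), by omega⟩ j)) (fun _ _ => Finset.mem_univ _) ?_
      intro s₁ hs₁ s₂ hs₂ heq
      by_contra hne
      have hs₁' : s₁ ∈ Finset.univ.filter (fun s : 𝒮 => 0 < p (s, w)) := hs₁
      have hs₂' : s₂ ∈ Finset.univ.filter (fun s : 𝒮 => 0 < p (s, w)) := hs₂
      have hw₁ : B₀ * xf s₁ = w := hxf2 s₁ hs₁'
      have hw₂ : B₀ * xf s₂ = w := hxf2 s₂ hs₂'
      have hd0 : ∀ i : Fin n, (i : ℕ) < μ + k → ∀ j, xf s₁ i j = xf s₂ i j := by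
        intro i hi j
        by_cases hiμ : (i : ℕ) < μ
        · have h1 := hBmul (xf s₁) ⟨(i : ℕ), hiμ⟩ j
          have h2 := hBmul (xf s₂) ⟨(i : ℕ), hiμ⟩ j
          have hidx : (⟨((⟨(i : ℕ), hiμ⟩ : Fin μ) : ℕ), lt_of_lt_of_le (⟨(i : ℕ), hiμ⟩ : Fin μ).2 hμn⟩ : Fin n) = i :=
            Fin.ext rfl
          rw [hidx] at h1 h2
          rw [hw₁] at h1
          rw [hw₂] at h2
          rw [← h1, ← h2]
        · have hiμ' : μ ≤ (i : ℕ) := le_of_not_gt hiμ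
          have h3 := congrFun (congrFun heq ⟨(i : ℕ) - μ, by omega⟩) j
          simp only [Matrix.of_apply] at h3
          have hidx : (⟨μ + ((⟨(i : ℕ) - μ, by omega⟩ : Fin k) : ℕ), by omega⟩ : Fin n) = i := by
            apply Fin.ext
            simp
            omega
          rwa [hidx] at h3
      set v : Fin n → F :=
        fun i => if μ + k ≤ (i : ℕ) ∧ (i : ℕ) < μ + k + ρ then 0 else 1 with hv
      set A := Matrix.diagonal v with hA
      have hArank : n - ρ ≤ A.rank := by
        rw [hA, Matrix.rank_diagonal]
        have hcc : Fintype.card {i // v i ≠ 0}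
            = (Finset.univ.filter
              (fun i : Fin n => ¬(μ + k ≤ (i : ℕ) ∧ (i : ℕ) < μ + k + ρ))).card := by
          rw [Fintype.card_subtype]
          congr 1
          ext i
          by_cases hc : μ + k ≤ (i : ℕ) ∧ (i : ℕ) < μ + k + ρ <;> simp [hv, hc]
        rw [hcc, card_filter_not_interval n _ _ (by omega)]
        omega
      set Z₁ := Matrix.of (fun (i : Fin n) (j : Fin m) =>
        if μ + k + ρ ≤ (i : ℕ) ∧ (i : ℕ) < μ + k + ρ + t
          then xf s₂ i j - xf s₁ i j else 0) with hZ₁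
      set Z₂ := Matrix.of (fun (i : Fin n) (j : Fin m) =>
        if μ + k + ρ + t ≤ (i : ℕ) then xf s₁ i j - xf s₂ i j else 0) with hZ₂
      have hZ₁rank : Z₁.rank ≤ t := by
        have h4 := rank_le_card_support Z₁
          (Finset.univ.filter
            (fun i : Fin n => μ + k + ρ ≤ (i : ℕ) ∧ (i : ℕ) < μ + k + ρ + t)) ?_
        · refine le_trans h4 ?_
          rw [card_filter_interval n _ _ (by omega)]
          omega
        · intro i hi j
          simp only [Finset.mem_filter, Finset.mem_univ, true_and] at hi
          simp [hZ₁, hi]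
      have hZ₂rank : Z₂.rank ≤ t := by
        have h4 := rank_le_card_support Z₂
          (Finset.univ.filter
            (fun i : Fin n => μ + k + ρ + t ≤ (i : ℕ) ∧ (i : ℕ) < n)) ?_
        · refine le_trans h4 ?_
          rw [card_filter_interval n _ _ (le_refl n)]
          omega
        · intro i hi j
          simp only [Finset.mem_filter, Finset.mem_univ, true_and] at hi
          have hi' : ¬(μ + k + ρ + t ≤ (i : ℕ)) := by
            intro hcon
            exact hi ⟨hcon, i.2⟩
          simp [hZ₂, hi']
      set y := A * xf s₁ + Z₁ with hy
      have hmem₁ : (A, y) ∈ fanOut ρ t (xf s₁) := ⟨hArank, Z₁, hZ₁rank, rfl⟩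
      have hyx₂ : y = A * xf s₂ + Z₂ := by
        rw [hy]
        ext i j
        rw [Matrix.add_apply, Matrix.add_apply, hA, Matrix.diagonal_mul, Matrix.diagonal_mul]
        simp only [hZ₁, hZ₂, Matrix.of_apply, hv]
        split_ifs <;>
          first
            | (exfalso; omega)
            | ring1
            | (rw [hd0 i (by omega) j]; try ring1)
      have hmem₂ : (A, y) ∈ fanOut ρ t (xf s₂) := ⟨hArank, Z₂, hZ₂rank, hyx₂⟩
      have hcontra := hdisj s₁ s₂ hne
      have hmm : (A, y) ∈
          (⋃ x ∈ {x | 0 < P {ω | S ω = s₁ ∧ X ω = x}}, fanOut ρ t x) ∩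
            (⋃ x ∈ {x | 0 < P {ω | S ω = s₂ ∧ X ω = x}}, fanOut ρ t x) :=
        ⟨Set.mem_biUnion (hxf1 s₁ hs₁') hmem₁, Set.mem_biUnion (hxf1 s₂ hs₂') hmem₂⟩
      rw [hcontra] at hmm
      exact hmm
    refine le_trans hle (le_of_eq ?_)
    rw [hK, ← hF]
    show Fintype.card (Fin k → Fin m → F) = Fintype.card F ^ (k * m)
    rw [Fintype.card_fun, Fintype.card_fun, Fintype.card_fin, Fintype.card_fin,
      ← pow_mul, mul_comm m k]
  have hfinal := cond_entropy_le p (fun x => ENNReal.toReal_nonneg) hsum K hKpos hcard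
  rw [hSentropy]
  refine le_trans hfinal ?_
  have hlog : Real.log (K : ℝ) = (k : ℝ) * (m * Real.log q) := by
    rw [hK, Nat.cast_pow, Real.log_pow]
    push_cast
    ring
  rw [hlog]
  have hkcast : (k : ℝ) = (n : ℝ) - 2 * t - ρ - μ := by
    rw [hk, Nat.cast_sub hpar]
    push_cast
    ring
  rw [hkcast]
end

section
/- Let q be a prime power, n and m positive integers, and μ an integer with 1 ≤ μ ≤ n − 1. Let X be a random variable with values in Fq^{n×m}, and for a subset I ⊆ {1,…,n} let X_I denote the submatrix of X consisting of the rows indexed by I. If H(X | X_I) = (n − μ)·m·log q for every subset I with |I| = μ, then X is uniformly distributed on Fq^{n×m}. -/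
set_option autoImplicit false

open Matrix MeasureTheory

/-- Conditional entropy (in nats) `H(X|Y) = H(X,Y) - H(Y)`. -/
noncomputable def condEntropy {Ω α β : Type*} [Fintype α] [Fintype β] [MeasurableSpace Ω]
    (P : Measure Ω) (X : Ω → α) (Y : Ω → β) : ℝ :=
  entropy P (fun ω => (X ω, Y ω)) - entropy P Y

/-- Gibbs-type fiber bound with equality case. -/
lemma gibbs_fiber {α : Type*} (S : Finset α) (p : α → ℝ) (hp : ∀ x ∈ S, 0 ≤ p x)
    (K : ℕ) (hK : S.card = K) (hKpos : 0 < K) :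
    ((-∑ x ∈ S, p x * Real.log (p x)) + (∑ x ∈ S, p x) * Real.log (∑ x ∈ S, p x)
      ≤ (∑ x ∈ S, p x) * Real.log K) ∧
    ((-∑ x ∈ S, p x * Real.log (p x)) + (∑ x ∈ S, p x) * Real.log (∑ x ∈ S, p x)
      = (∑ x ∈ S, p x) * Real.log K → ∀ x ∈ S, p x = (∑ y ∈ S, p y) / K) := by
  set s : ℝ := ∑ x ∈ S, p x with hs
  have hsnn : 0 ≤ s := Finset.sum_nonneg hp
  rcases eq_or_lt_of_le hsnn with h0 | hspos
  · -- s = 0 : all p x = 0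
    have hz : ∀ x ∈ S, p x = 0 := by
      intro x hx
      exact (Finset.sum_eq_zero_iff_of_nonneg hp).1 h0.symm x hx
    have h1 : ∑ x ∈ S, p x * Real.log (p x) = 0 :=
      Finset.sum_eq_zero fun x hx => by rw [hz x hx]; ring
    constructor
    · rw [h1, ← h0]; simp
    · intro _ x hx; rw [hz x hx, ← h0]; simp
  · -- s > 0
    have hKR : (0:ℝ) < (K:ℝ) := by exact_mod_cast hKpos
    set c : ℝ := s / K with hc
    have hcpos : 0 < c := div_pos hspos hKR
    have hterm : ∀ x ∈ S, p x * Real.log (c / p x) ≤ c - p x := by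
      intro x hx
      rcases eq_or_lt_of_le (hp x hx) with h | h
      · rw [← h]; simpa using hcpos.le
      · have hlog := Real.log_le_sub_one_of_pos (div_pos hcpos h)
        have := mul_le_mul_of_nonneg_left hlog h.le
        calc p x * Real.log (c / p x) ≤ p x * (c / p x - 1) := this
          _ = c - p x := by field_simp
    have hstrict : ∀ x ∈ S, p x ≠ c → p x * Real.log (c / p x) < c - p x := by
      intro x hx hne
      rcases eq_or_lt_of_le (hp x hx) with h | h
      · rw [← h]
        simpa using lt_of_le_of_ne hcpos.le (fun habs => hne (by rw [← h, ← habs]))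
      · have hne1 : c / p x ≠ 1 := by
          intro habs
          exact hne (by field_simp at habs; linarith)
        have hlog := Real.log_lt_sub_one_of_pos (div_pos hcpos h) hne1
        have := mul_lt_mul_of_pos_left hlog h
        calc p x * Real.log (c / p x) < p x * (c / p x - 1) := this
          _ = c - p x := by field_simp
    have hsumrhs : ∑ x ∈ S, (c - p x) = 0 := by
      rw [Finset.sum_sub_distrib, Finset.sum_const, hK, ← hs, hc]
      rw [nsmul_eq_mul]
      field_simp
      ring
    have hlhs : ∑ x ∈ S, p x * Real.log (c / p x)
        = s * Real.log c - ∑ x ∈ S, p x * Real.log (p x) := by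
      rw [hs, eq_comm, Finset.sum_mul, ← Finset.sum_sub_distrib]
      apply Finset.sum_congr rfl
      intro x hx
      rcases eq_or_lt_of_le (hp x hx) with h | h
      · rw [← h]; ring
      · rw [Real.log_div hcpos.ne' h.ne']; ring
    have hclog : s * Real.log c = s * Real.log s - s * Real.log K := by
      rw [hc, Real.log_div hspos.ne' hKR.ne']; ring
    constructor
    · have hle : ∑ x ∈ S, p x * Real.log (c / p x) ≤ 0 := by
        rw [← hsumrhs]; exact Finset.sum_le_sum hterm
      rw [hlhs, hclog] at hle; linarith
    · intro heq
      by_contra hne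
      push_neg at hne
      obtain ⟨x0, hx0, hx0ne⟩ := hne
      have hx0ne' : p x0 ≠ c := by rw [hc]; exact hx0ne
      have hlt : ∑ x ∈ S, p x * Real.log (c / p x) < ∑ x ∈ S, (c - p x) :=
        Finset.sum_lt_sum hterm ⟨x0, hx0, hstrict x0 hx0 hx0ne'⟩
      rw [hsumrhs, hlhs, hclog] at hlt; linarith

/-- Cardinality of the fiber of the row-restriction map. -/
lemma card_fiber (n m : ℕ) (F : Type) [Fintype F] [DecidableEq F]
    (I : Finset (Fin n)) (a : I → Fin m → F) :
    (Finset.univ.filter (fun x : Matrix (Fin n) (Fin m) F =>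
      (fun (i : I) (j : Fin m) => x i j) = a)).card
      = (Fintype.card F ^ m) ^ (n - I.card) := by
  classical
  rw [← Fintype.card_subtype]
  have e : {x : Matrix (Fin n) (Fin m) F // (fun (i : I) (j : Fin m) => x i j) = a}
      ≃ ({i : Fin n // i ∉ I} → Fin m → F) :=
    { toFun := fun x i => x.1 i.1
      invFun := fun y => ⟨fun i j => if h : i ∈ I then a ⟨i, h⟩ j else y ⟨i, h⟩ j, by
        funext i j; simp [i.2]⟩
      left_inv := by
        rintro ⟨x, hx⟩
        ext i j
        dsimp only
        split_ifs with h
        · exact (congrFun (congrFun hx ⟨i, h⟩) j).symm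
        · rfl
      right_inv := by
        intro y; funext i j; simp [i.2] }
  rw [Fintype.card_congr e]
  rw [Fintype.card_fun, Fintype.card_fun, Fintype.card_fin]
  rw [Fintype.card_subtype_compl, Fintype.card_fin, Fintype.card_coe]

/-- Total probability over a finite codomain. -/
lemma sum_meas_fiber_eq_one {Ω : Type} [Fintype Ω] [MeasurableSpace Ω]
    [MeasurableSingletonClass Ω] (P : Measure Ω) [IsProbabilityMeasure P]
    {β : Type} [Fintype β] (Y : Ω → β) :
    ∑ b : β, P {ω | Y ω = b} = 1 := by
  have hdisj : Set.PairwiseDisjoint ((Finset.univ : Finset β) : Set β)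
      (fun b => {ω | Y ω = b}) := by
    intro b _ b' _ hbb'
    simp only [Function.onFun]
    apply Set.disjoint_left.2
    intro ω h1 h2
    exact hbb' ((h1 : Y ω = b).symm.trans h2)
  rw [← measure_biUnion_finset hdisj
    (fun b _ => (Set.to_countable _).measurableSet)]
  have : (⋃ b ∈ (Finset.univ : Finset β), {ω | Y ω = b}) = Set.univ := by
    ext ω; simp
  rw [this, measure_univ]

/-- If `H(X | X_I) = (n - μ)·m·log q` for every subset `I` of rows with `|I| = μ`,
then `X` is uniformly distributed on `F^{n×m}`. -/
theorem uniform_of_condEntropy_all_row_subsets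
    (q : ℕ) (hq : IsPrimePow q) (n m : ℕ) (hn : 0 < n) (hm : 0 < m)
    (μ : ℕ) (hμ1 : 1 ≤ μ) (hμn : μ ≤ n - 1)
    (F : Type) [Field F] [Fintype F] (hF : Fintype.card F = q)
    (Ω : Type) [Fintype Ω] [MeasurableSpace Ω] [MeasurableSingletonClass Ω]
    (P : Measure Ω) [IsProbabilityMeasure P]
    (X : Ω → Matrix (Fin n) (Fin m) F)
    (hcond : ∀ I : Finset (Fin n), I.card = μ →
      condEntropy P X (fun ω => fun (i : I) (j : Fin m) => X ω i j) =
        ((n - μ : ℕ) : ℝ) * (m * Real.log q)) :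
    ∀ x : Matrix (Fin n) (Fin m) F,
      P {ω | X ω = x} = ((Fintype.card (Matrix (Fin n) (Fin m) F) : ENNReal))⁻¹ := by
  classical
  have hmeas : ∀ (s : Set Ω), MeasurableSet s := fun s => (Set.to_countable s).measurableSet
  set p : Matrix (Fin n) (Fin m) F → ℝ := fun x => (P {ω | X ω = x}).toReal with hp_def
  have hpnn : ∀ x, 0 ≤ p x := fun x => ENNReal.toReal_nonneg
  have hpsum : ∑ x, p x = 1 := by
    rw [hp_def, ← ENNReal.toReal_sum (fun x _ => measure_ne_top P _),
      sum_meas_fiber_eq_one P X, ENNReal.toReal_one]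
  have hFpos : 0 < Fintype.card F := Fintype.card_pos
  set K : ℕ := (Fintype.card F ^ m) ^ (n - μ) with hK_def
  have hKpos : 0 < K := pow_pos (pow_pos hFpos m) _
  -- the key step: p depends only on the rows in I, for every I of size μ
  have hkey : ∀ I : Finset (Fin n), I.card = μ →
      ∀ x y : Matrix (Fin n) (Fin m) F, (∀ i : Fin n, i ∈ I → x i = y i) → p x = p y := by
    intro I hI x y hxy
    set f : Matrix (Fin n) (Fin m) F → ({i : Fin n // i ∈ I} → Fin m → F) :=
      fun z => fun (i : I) (j : Fin m) => z i j with hf_def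
    set T : ({i : Fin n // i ∈ I} → Fin m → F) → Finset (Matrix (Fin n) (Fin m) F) :=
      fun a => Finset.univ.filter (fun z => f z = a) with hT_def
    set r : ({i : Fin n // i ∈ I} → Fin m → F) → ℝ := fun a => ∑ z ∈ T a, p z with hr_def
    -- measure of fibers
    have hPfr : ∀ a, (P {ω | f (X ω) = a}).toReal = r a := by
      intro a
      have hdisj : Set.PairwiseDisjoint
          ((T a : Finset (Matrix (Fin n) (Fin m) F)) : Set (Matrix (Fin n) (Fin m) F))
          (fun z => {ω | X ω = z}) := by
        intro b _ b' _ hbb'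
        simp only [Function.onFun]
        apply Set.disjoint_left.2
        intro ω h1 h2
        exact hbb' ((h1 : X ω = b).symm.trans h2)
      have hun : {ω | f (X ω) = a} = ⋃ z ∈ T a, {ω | X ω = z} := by
        ext ω
        simp only [Set.mem_setOf_eq, Set.mem_iUnion, hT_def, Finset.mem_filter,
          Finset.mem_univ, true_and]
        constructor
        · intro h; exact ⟨X ω, h, rfl⟩
        · rintro ⟨z, hz, hz2⟩; rw [hz2]; exact hz
      rw [hun, measure_biUnion_finset hdisj (fun z _ => hmeas _),
        ENNReal.toReal_sum (fun z _ => measure_ne_top P _)]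
    -- entropy of the pair equals entropy of X
    have hpair : entropy P (fun ω => (X ω, f (X ω))) = entropy P X := by
      unfold entropy
      congr 1
      rw [Fintype.sum_prod_type]
      apply Finset.sum_congr rfl
      intro z _
      rw [Finset.sum_eq_single (f z)]
      · have h1 : {ω | (X ω, f (X ω)) = (z, f z)} = {ω | X ω = z} := by
          ext ω
          simp only [Set.mem_setOf_eq, Prod.mk.injEq]
          constructor
          · exact fun h => h.1
          · intro h; exact ⟨h, by rw [h]⟩
        rw [h1]
      · intro a _ ha
        have h2 : {ω | (X ω, f (X ω)) = (z, a)} = ∅ := by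
          ext ω
          simp only [Set.mem_setOf_eq, Prod.mk.injEq, Set.mem_empty_iff_false, iff_false]
          rintro ⟨hz, hfa⟩
          exact ha (hfa.symm.trans (congrArg f hz))
        rw [h2]
        simp
      · intro h; exact absurd (Finset.mem_univ _) h
    -- the entropy equation
    have heq : (-∑ z, p z * Real.log (p z)) + ∑ a, r a * Real.log (r a)
        = ((n - μ : ℕ) : ℝ) * (m * Real.log q) := by
      have hc := hcond I hI
      have hY : (fun ω => fun (i : I) (j : Fin m) => X ω i j) = fun ω => f (X ω) := rfl
      rw [hY] at hc
      unfold condEntropy at hc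
      rw [hpair] at hc
      unfold entropy at hc
      have hE : ∑ a, (P {ω | f (X ω) = a}).toReal * Real.log (P {ω | f (X ω) = a}).toReal
          = ∑ a, r a * Real.log (r a) :=
        Finset.sum_congr rfl fun a _ => by rw [hPfr a]
      rw [hE] at hc
      rw [← hc, hp_def]
      ring
    -- fiber cardinalities
    have hTcard : ∀ a, (T a).card = K := by
      intro a
      rw [hT_def, hK_def, ← hI]
      exact card_fiber n m F I a
    -- apply the Gibbs bound to each fiber
    have hgibbs := fun a => gibbs_fiber (T a) p (fun z _ => hpnn z) K (hTcard a) hKpos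
    -- sums over fibers
    have hfib : ∀ g : Matrix (Fin n) (Fin m) F → ℝ,
        ∑ a, ∑ z ∈ T a, g z = ∑ z, g z := by
      intro g
      rw [hT_def]
      exact Finset.sum_fiberwise _ f g
    have hrsum : ∑ a, r a = 1 := by rw [hr_def]; rw [hfib p]; exact hpsum
    -- log K
    have hlogK : Real.log K = ((n - μ : ℕ) : ℝ) * (m * Real.log q) := by
      rw [hK_def, hF]
      push_cast
      rw [Real.log_pow, Real.log_pow]
    -- termwise equality
    set u : ({i : Fin n // i ∈ I} → Fin m → F) → ℝ :=
      fun a => (-∑ z ∈ T a, p z * Real.log (p z)) + r a * Real.log (r a) with hu_def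
    set v : ({i : Fin n // i ∈ I} → Fin m → F) → ℝ := fun a => r a * Real.log K with hv_def
    have husum : ∑ a, u a = (-∑ z, p z * Real.log (p z)) + ∑ a, r a * Real.log (r a) := by
      rw [hu_def, Finset.sum_add_distrib, ← hfib (fun z => p z * Real.log (p z))]
      congr 1
      exact Finset.sum_neg_distrib _
    have hvsum : ∑ a, v a = ((n - μ : ℕ) : ℝ) * (m * Real.log q) := by
      rw [hv_def, ← Finset.sum_mul, hrsum, one_mul, hlogK]
    have hsum_eq : ∑ a, u a = ∑ a, v a := by rw [husum, hvsum, heq]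
    have hall : ∀ a, u a = v a := by
      intro a
      by_contra hne
      have hlt : u a < v a := lt_of_le_of_ne ((hgibbs a).1) hne
      have : ∑ a, u a < ∑ a, v a :=
        Finset.sum_lt_sum (fun b _ => (hgibbs b).1) ⟨a, Finset.mem_univ a, hlt⟩
      exact absurd hsum_eq (ne_of_lt this)
    -- conclude
    have hfxy : f x = f y := by
      funext i j
      show x i.1 j = y i.1 j
      rw [hxy i.1 i.2]
    have hx_mem : x ∈ T (f x) := by
      rw [hT_def]; simp
    have hy_mem : y ∈ T (f y) := by
      rw [hT_def]; simp
    have hpx := (hgibbs (f x)).2 (hall (f x)) x hx_mem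
    have hpy := (hgibbs (f y)).2 (hall (f y)) y hy_mem
    rw [hpx, hpy, hfxy]
  -- p is invariant under changing one row
  have hrow : ∀ (x y : Matrix (Fin n) (Fin m) F) (j : Fin n),
      (∀ i, i ≠ j → x i = y i) → p x = p y := by
    intro x y j hxy
    have hcard : μ ≤ (Finset.univ.erase j).card := by
      rw [Finset.card_erase_of_mem (Finset.mem_univ j), Finset.card_univ, Fintype.card_fin]
      exact hμn
    obtain ⟨I, hIsub, hIcard⟩ := Finset.exists_subset_card_eq hcard
    exact hkey I hIcard x y fun i hi => hxy i (Finset.mem_erase.1 (hIsub hi)).1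
  -- p is constant
  have hconst : ∀ x y : Matrix (Fin n) (Fin m) F, p x = p y := by
    intro x y
    have hgen : ∀ s : Finset (Fin n), p x = p (fun i => if i ∈ s then y i else x i) := by
      intro s
      induction s using Finset.induction_on with
      | empty =>
        have h0 : (fun i => if i ∈ (∅ : Finset (Fin n)) then y i else x i) = x := by
          funext i; simp
        rw [h0]
      | @insert j s hjs ih =>
        refine ih.trans (hrow _ _ j fun i hi => ?_)
        simp [Finset.mem_insert, hi]
    have h1 := hgen Finset.univ
    have h2 : (fun i => if i ∈ (Finset.univ : Finset (Fin n)) then y i else x i) = y := by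
      funext i; simp
    rw [h2] at h1
    exact h1
  -- conclude the value
  intro x
  have hNpos : 0 < Fintype.card (Matrix (Fin n) (Fin m) F) := Fintype.card_pos
  have hNR : (0:ℝ) < (Fintype.card (Matrix (Fin n) (Fin m) F) : ℝ) := by exact_mod_cast hNpos
  have hval : (Fintype.card (Matrix (Fin n) (Fin m) F) : ℝ) * p x = 1 := by
    rw [← hpsum]
    rw [Finset.sum_congr rfl fun z _ => hconst z x]
    rw [Finset.sum_const, Finset.card_univ, nsmul_eq_mul]
  have hpx : p x = ((Fintype.card (Matrix (Fin n) (Fin m) F) : ℝ))⁻¹ := by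
    field_simp at hval ⊢
    linarith
  have hne : ((Fintype.card (Matrix (Fin n) (Fin m) F) : ENNReal))⁻¹ ≠ ⊤ := by
    simp [hNpos.ne']
  refine (ENNReal.toReal_eq_toReal_iff' (measure_ne_top P _) hne).1 ?_
  rw [show (P {ω | X ω = x}).toReal = p x from rfl, hpx]
  simp [ENNReal.toReal_inv]
end

section
/- Let q be a prime power, n and m positive integers, and d an integer with 1 ≤ d ≤ min(n, m). If C ⊆ Fq^{n×m} is a set of matrices such that rank(x − y) ≥ d for all distinct x, y ∈ C, then |C| ≤ q^{max(n,m)·(min(n,m) − d + 1)} (the Singleton bound for the rank metric). -/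
set_option autoImplicit false
set_option maxHeartbeats 800000

open Matrix

lemma rank_le_of_zero_rows {F : Type} [Field F] {n m k : ℕ} (hk : k ≤ n)
    (z : Matrix (Fin n) (Fin m) F) (hz : ∀ i : Fin n, (i : ℕ) < k → ∀ j, z i j = 0) :
    z.rank ≤ n - k := by
  classical
  set g : Fin (n - k) → Fin n := fun l => ⟨k + l, by omega⟩ with hg
  set w : Matrix (Fin (n - k)) (Fin m) F := z.submatrix g id with hw
  set P : Matrix (Fin n) (Fin (n - k)) F := fun i l => if i = g l then 1 else 0 with hP
  have hzPw : z = P * w := by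
    ext i j
    rw [Matrix.mul_apply]
    by_cases hi : k ≤ (i : ℕ)
    · set l₀ : Fin (n - k) := ⟨(i : ℕ) - k, by omega⟩ with hl₀
      have hgl₀ : g l₀ = i := by
        simp [hg, hl₀, Fin.ext_iff]; omega
      have : ∀ l, (i = g l) ↔ (l = l₀) := by
        intro l
        constructor
        · intro h
          have : (g l : ℕ) = (i : ℕ) := by rw [h]
          simp [hg, hl₀, Fin.ext_iff] at this ⊢
          omega
        · intro h; rw [h, hgl₀]
      simp only [hP, hw, Matrix.submatrix_apply, id_eq, this]
      rw [Finset.sum_eq_single l₀]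
      · simp [hgl₀]
      · intro b _ hb; simp [hb]
      · intro h; simp at h
    · rw [hz i (by omega) j]
      symm
      apply Finset.sum_eq_zero
      intro l _
      have : ¬ (i = g l) := by
        intro h
        have : (i : ℕ) = k + (l : ℕ) := by rw [h]
        omega
      simp [hP, this]
  calc z.rank = (P * w).rank := by rw [hzPw]
    _ ≤ w.rank := Matrix.rank_mul_le_right P w
    _ ≤ Fintype.card (Fin (n - k)) := Matrix.rank_le_card_height w
    _ = n - k := Fintype.card_fin _

lemma aux_singleton {F : Type} [Field F] [Fintype F] {n m d : ℕ}
    (hd1 : 1 ≤ d) (hdn : d ≤ n) (hnm : n ≤ m)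
    (C : Set (Matrix (Fin n) (Fin m) F))
    (hC : ∀ x ∈ C, ∀ y ∈ C, x ≠ y → d ≤ (x - y).rank) :
    C.ncard ≤ Fintype.card F ^ (m * (n - d + 1)) := by
  classical
  set k : ℕ := n - d + 1 with hkdef
  have hk : k ≤ n := by omega
  set f : Matrix (Fin n) (Fin m) F → Matrix (Fin k) (Fin m) F :=
    fun A => A.submatrix (Fin.castLE hk) id with hf
  have hinj : Set.InjOn f C := by
    intro x hx y hy hxy
    by_contra hne
    have hrank : d ≤ (x - y).rank := hC x hx y hy hne
    have hzero : ∀ i : Fin n, (i : ℕ) < k → ∀ j, (x - y) i j = 0 := by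
      intro i hi j
      have := congrFun (congrFun hxy ⟨(i : ℕ), hi⟩) j
      simp only [hf, Matrix.submatrix_apply, id_eq] at this
      have hcast : Fin.castLE hk (⟨(i : ℕ), hi⟩ : Fin k) = i := by
        simp [Fin.ext_iff]
      rw [hcast] at this
      simp [Matrix.sub_apply, this]
    have := rank_le_of_zero_rows hk (x - y) hzero
    omega
  have h1 : C.ncard = (f '' C).ncard := (Set.ncard_image_of_injOn hinj).symm
  have h2 : (f '' C).ncard ≤ (Set.univ : Set (Matrix (Fin k) (Fin m) F)).ncard :=
    Set.ncard_le_ncard (Set.subset_univ _) Set.finite_univ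
  have h3 : (Set.univ : Set (Matrix (Fin k) (Fin m) F)).ncard
      = Fintype.card (Matrix (Fin k) (Fin m) F) := by
    rw [Set.ncard_univ, Nat.card_eq_fintype_card]
  have h4 : Fintype.card (Matrix (Fin k) (Fin m) F) = Fintype.card F ^ (m * k) := by
    have e : Matrix (Fin k) (Fin m) F ≃ (Fin k → Fin m → F) := Equiv.refl _
    rw [Fintype.card_congr e, Fintype.card_fun, Fintype.card_fun, Fintype.card_fin,
      Fintype.card_fin, ← pow_mul, Nat.mul_comm]
  
  rw [h1]
  calc (f '' C).ncard ≤ _ := h2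
    _ = Fintype.card F ^ (m * k) := by rw [h3, h4]


/-- The Singleton bound for the rank metric: a code `C ⊆ F^{n×m}` in which all pairs of
distinct matrices are at rank distance at least `d` has at most
`q^{max(n,m)·(min(n,m) - d + 1)}` codewords. -/
theorem singleton_bound_rank_metric
    (q : ℕ) (hq : IsPrimePow q) (n m : ℕ) (hn : 0 < n) (hm : 0 < m)
    (d : ℕ) (hd1 : 1 ≤ d) (hd2 : d ≤ min n m)
    (F : Type) [Field F] [Fintype F] (hF : Fintype.card F = q)
    (C : Set (Matrix (Fin n) (Fin m) F))
    (hC : ∀ x ∈ C, ∀ y ∈ C, x ≠ y → d ≤ (x - y).rank) :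
    C.ncard ≤ q ^ (max n m * (min n m - d + 1)) := by
  rcases le_total n m with hnm | hmn
  · have := aux_singleton (F := F) hd1 (by omega : d ≤ n) hnm C hC
    rw [hF] at this
    rwa [max_eq_right hnm, min_eq_left hnm]
  · -- transpose
    set D : Set (Matrix (Fin m) (Fin n) F) := (·ᵀ) '' C with hD
    have hCD : C.ncard = D.ncard := by
      rw [hD, Set.ncard_image_of_injective _ Matrix.transpose_injective]
    have hDd : ∀ x ∈ D, ∀ y ∈ D, x ≠ y → d ≤ (x - y).rank := by
      rintro _ ⟨a, ha, rfl⟩ _ ⟨b, hb, rfl⟩ hne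
      have hab : a ≠ b := by rintro rfl; exact hne rfl
      have := hC a ha b hb hab
      rwa [← Matrix.transpose_sub, Matrix.rank_transpose]
    have := aux_singleton (F := F) hd1 (by omega : d ≤ m) hmn D hDd
    rw [hF] at this
    rw [max_eq_left hmn, min_eq_right hmn, hCD]
    exact this
end
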